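/- arXiv:2202.13762 — 2 statements merged into one kernel-verified Lean document; each statement's English description precedes it below -/
import Mathlib

section
/- For every n ≥ 1 and −1 ≤ α, q ≤ 1, the type-B symmetrization operator on K_n = H^{⊗2n} factorizes as P_{α,q}^{(n)} = (I ⊗ P_{α,q}^{(n−1)} ⊗ I) R_{α,q}^{(n)}, where R_{α,q}^{(1)} = I + α π_0 and, for n ≥ 2, R_{α,q}^{(n)} = I + Σ_{k=1}^{n−1} q^k π_{n−1}⋯π_{n−k} + α q^{n−1} π_{n−1}π_{n−2}⋯π_1 π_0 (I + Σ_{k=1}^{n−1} q^k π_1⋯π_k), all operators acting on K_n via the B(n)-action. -/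
open scoped TensorProduct ComplexConjugate InnerProductSpace
open PiTensorProduct

noncomputable section

abbrev SIdx (n : ℕ) := Fin n × Bool
def negIdx {n : ℕ} (p : SIdx n) : SIdx n := (p.1, !p.2)
def sval {n : ℕ} (p : SIdx n) : ℤ := if p.2 then (p.1 : ℤ) + 1 else -((p.1 : ℤ) + 1)

def hyperoctahedral (n : ℕ) : Subgroup (Equiv.Perm (SIdx n)) where
  carrier := {σ | ∀ p, σ (negIdx p) = negIdx (σ p)}
  one_mem' := fun _ => rfl
  mul_mem' := by
    intro σ τ hσ hτ p
    simp only [Equiv.Perm.mul_apply, hτ p, hσ (τ p)]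
  inv_mem' := by
    intro σ hσ p
    have := hσ (σ⁻¹ p)
    simp only [← Equiv.Perm.mul_apply, mul_inv_cancel, Equiv.Perm.one_apply] at this
    have h2 : σ⁻¹ (σ (negIdx (σ⁻¹ p))) = σ⁻¹ (negIdx p) := by rw [this]
    simpa using h2.symm

instance (n : ℕ) : DecidablePred (· ∈ hyperoctahedral n) := fun σ =>
  decidable_of_iff (∀ p, σ (negIdx p) = negIdx (σ p)) Iff.rfl

def ninv {n : ℕ} (σ : Equiv.Perm (SIdx n)) : ℕ :=
  (Finset.univ.filter fun i : Fin n => sval (σ (i, true)) < 0).card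

def pinv {n : ℕ} (σ : Equiv.Perm (SIdx n)) : ℕ :=
  (Finset.univ.filter fun ij : Fin n × Fin n =>
      ij.1 < ij.2 ∧ sval (σ (ij.2, true)) < sval (σ (ij.1, true))).card +
  (Finset.univ.filter fun ij : Fin n × Fin n =>
      ij.1 < ij.2 ∧ sval (σ (ij.1, true)) < sval (σ (ij.2, false))).card

variable (H : Type*) [NormedAddCommGroup H] [InnerProductSpace ℂ H]

abbrev KSp (n : ℕ) : Type _ := ⨂[ℂ] (_ : SIdx n), H

def permB {n : ℕ} (σ : Equiv.Perm (SIdx n)) : KSp H n ≃ₗ[ℂ] KSp H n :=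
  PiTensorProduct.reindex ℂ (fun _ : SIdx n => H) σ

def symB (n : ℕ) (α q : ℝ) : Module.End ℂ (KSp H n) :=
  ∑ σ : hyperoctahedral n,
    (((α : ℂ) ^ ninv (σ : Equiv.Perm (SIdx n))) * ((q : ℂ) ^ pinv (σ : Equiv.Perm (SIdx n)))) •
      (permB H (σ : Equiv.Perm (SIdx n))).toLinearMap

open Fin.NatCast in
def tauGen (n : ℕ) [NeZero n] (i : ℕ) : Equiv.Perm (SIdx n) :=
  if i = 0 then Equiv.swap ((0 : Fin n), false) ((0 : Fin n), true)
  else Equiv.swap (((i - 1 : ℕ) : Fin n), true) ((i : Fin n), true) *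
       Equiv.swap (((i - 1 : ℕ) : Fin n), false) ((i : Fin n), false)

/-- The operator of the generator `π_i` on `K_n`. -/
def tauEnd (n : ℕ) [NeZero n] (i : ℕ) : Module.End ℂ (KSp H n) :=
  (permB H (tauGen n i)).toLinearMap

/-- `R_{α,q}^{(n)}` for `n = m+1`:
`R = I + ∑_{k=1}^{n-1} q^k π_{n-1}⋯π_{n-k}
   + α q^{n-1} π_{n-1}⋯π_1 π_0 (I + ∑_{k=1}^{n-1} q^k π_1⋯π_k)`. -/
def Rop (m : ℕ) (α q : ℝ) : Module.End ℂ (KSp H (m + 1)) :=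
  1 + (∑ k ∈ Finset.Icc 1 m,
        (q : ℂ) ^ k • ((List.range k).map fun j => tauEnd H (m + 1) (m - j)).prod)
    + ((α : ℂ) * (q : ℂ) ^ m) •
        (((List.range m).map fun j => tauEnd H (m + 1) (m - j)).prod * tauEnd H (m + 1) 0 *
          (1 + ∑ k ∈ Finset.Icc 1 m,
            (q : ℂ) ^ k • ((List.range k).map fun j => tauEnd H (m + 1) (1 + j)).prod))

def midEquiv (m : ℕ) : SIdx m ≃ {p : SIdx (m + 1) // (p.1 : ℕ) < m} where
  toFun a := ⟨(a.1.castSucc, a.2), by simp⟩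
  invFun b := (⟨(b.1.1 : ℕ), b.2⟩, b.1.2)
  left_inv := by intro a; ext <;> simp
  right_inv := by intro b; ext <;> simp

def extendMid (m : ℕ) (σ : Equiv.Perm (SIdx m)) : Equiv.Perm (SIdx (m + 1)) :=
  σ.extendDomain (midEquiv m)

/-- `I ⊗ P_{α,q}^{(n-1)} ⊗ I` acting on `K_n` for `n = m+1`: the type-B symmetrization of the
middle `2m` factors, identity on the outermost factors `±(m+1)`. -/
def midSym (m : ℕ) (α q : ℝ) : Module.End ℂ (KSp H (m + 1)) :=
  ∑ σ : hyperoctahedral m,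
    (((α : ℂ) ^ ninv (σ : Equiv.Perm (SIdx m))) * ((q : ℂ) ^ pinv (σ : Equiv.Perm (SIdx m)))) •
      (permB H (extendMid m (σ : Equiv.Perm (SIdx m)))).toLinearMap


-- ===== auxiliary development =====

namespace SymBAux

variable {m n : ℕ}

theorem permB_one : (permB H (1 : Equiv.Perm (SIdx n))).toLinearMap = 1 := by
  have : (1 : Equiv.Perm (SIdx n)) = Equiv.refl _ := rfl
  rw [permB, this, PiTensorProduct.reindex_refl]; rfl

theorem permB_mul (σ τ : Equiv.Perm (SIdx n)) :
    (permB H (σ * τ)).toLinearMap =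
      (permB H σ).toLinearMap * (permB H τ).toLinearMap := by
  have h := PiTensorProduct.reindex_trans (R := ℂ) (s := fun _ : SIdx n => H)
    (e := τ) (e' := σ)
  have : (τ.trans σ) = σ * τ := rfl
  rw [this] at h
  rw [permB, ← h]; rfl

/-- `permB` as a monoid hom into the endomorphism ring. -/
def PB (H : Type*) [NormedAddCommGroup H] [InnerProductSpace ℂ H] (n : ℕ) :
    Equiv.Perm (SIdx n) →* Module.End ℂ (KSp H n) where
  toFun σ := (permB H σ).toLinearMap
  map_one' := permB_one H
  map_mul' := permB_mul H

theorem tauEnd_eq [NeZero n] (i : ℕ) : tauEnd H n i = PB H n (tauGen n i) := rfl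

end SymBAux

namespace SymBAux

variable {m : ℕ}

def repFun (p x : SIdx (m + 1)) : SIdx (m + 1) :=
  if x.1.1 < p.1.1 then x
  else if x.1.1 = p.1.1 then (Fin.last m, xor x.2 (!p.2))
  else (⟨x.1.1 - 1, by have := x.1.isLt; omega⟩, x.2)

def repInv (p x : SIdx (m + 1)) : SIdx (m + 1) :=
  if x.1.1 < p.1.1 then x
  else if h : x.1.1 = m then (p.1, xor x.2 (!p.2))
  else (⟨x.1.1 + 1, by have := x.1.isLt; omega⟩, x.2)

def repPerm (p : SIdx (m + 1)) : Equiv.Perm (SIdx (m + 1)) where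
  toFun := repFun p
  invFun := repInv p
  left_inv := by
    rintro ⟨⟨i, hi⟩, c⟩
    rcases p with ⟨⟨j, hj⟩, b⟩
    by_cases h1 : i < j
    · simp [repFun, repInv, h1]
    · by_cases h2 : i = j
      · have e1 : repFun (⟨j,hj⟩, b) (⟨i,hi⟩, c) = (Fin.last m, xor c !b) := by
          simp [repFun, h1, h2]
        rw [e1]
        have e2 : repInv (⟨j,hj⟩, b) (Fin.last m, xor c !b)
            = (⟨j, hj⟩, xor (xor c !b) !b) := by
          simp only [repInv, Fin.last]
          rw [if_neg (by omega)]
          simp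
        rw [e2]
        refine Prod.ext (by simp [h2]) ?_
        simp [Bool.xor_assoc]
      · have hij : j < i := by omega
        have e1 : repFun (⟨j,hj⟩, b) (⟨i,hi⟩, c) = (⟨i - 1, by omega⟩, c) := by
          simp [repFun, h1, h2]
        rw [e1]
        have e2 : repInv (⟨j,hj⟩, b) (⟨i - 1, by omega⟩, c)
            = (⟨i - 1 + 1, by omega⟩, c) := by
          simp only [repInv]
          rw [if_neg (show ¬((i:ℕ) - 1 < j) by omega),
            dif_neg (show ¬((i:ℕ) - 1 = m) by omega)]
        rw [e2]
        exact Prod.ext (Fin.ext (by simp; omega)) rfl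
  right_inv := by
    rintro ⟨⟨i, hi⟩, c⟩
    rcases p with ⟨⟨j, hj⟩, b⟩
    by_cases h1 : i < j
    · simp [repFun, repInv, h1]
    · by_cases h2 : i = m
      · have e1 : repInv (⟨j,hj⟩, b) (⟨i,hi⟩, c) = (⟨j, hj⟩, xor c !b) := by
          simp only [repInv]
          rw [if_neg (by simp; omega), dif_pos (by simp [h2])]
        rw [e1]
        have e2 : repFun (⟨j,hj⟩, b) (⟨j, hj⟩, xor c !b)
            = (Fin.last m, xor (xor c !b) !b) := by
          simp [repFun]
        rw [e2]
        refine Prod.ext (Fin.ext (by simp [Fin.last, h2])) ?_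
        simp [Bool.xor_assoc]
      · have e1 : repInv (⟨j,hj⟩, b) (⟨i,hi⟩, c) = (⟨i + 1, by omega⟩, c) := by
          simp only [repInv]
          rw [if_neg (show ¬(i < j) by omega), dif_neg (show ¬(i = m) by omega)]
        rw [e1]
        have e2 : repFun (⟨j,hj⟩, b) (⟨i + 1, by omega⟩, c) = (⟨i, hi⟩, c) := by
          simp only [repFun]
          rw [if_neg (show ¬(i + 1 < j) by omega), if_neg (show ¬(i + 1 = j) by omega)]
          exact Prod.ext (Fin.ext (by simp)) rfl
        rw [e2]

end SymBAux

namespace SymBAux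

variable {m : ℕ}

theorem repPerm_apply_lt (p x : SIdx (m + 1)) (h : x.1.1 < p.1.1) :
    repPerm p x = x := by
  show repFun p x = x
  simp [repFun, h]

theorem repPerm_apply_eq (p : SIdx (m + 1)) (c : Bool) :
    repPerm p (p.1, c) = (Fin.last m, xor c (!p.2)) := by
  show repFun p (p.1, c) = _
  simp [repFun]

theorem repPerm_apply_gt (p x : SIdx (m + 1)) (h : p.1.1 < x.1.1) :
    repPerm p x = (⟨x.1.1 - 1, by have := x.1.isLt; omega⟩, x.2) := by
  show repFun p x = _
  simp only [repFun]
  rw [if_neg (by omega), if_neg (by omega)]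

theorem negIdx_fst (x : SIdx (m + 1)) : (negIdx x).1 = x.1 := rfl

theorem repPerm_mem (p : SIdx (m + 1)) : repPerm p ∈ hyperoctahedral (m + 1) := by
  intro x
  rcases lt_trichotomy (x.1.1) (p.1.1) with h | h | h
  · rw [repPerm_apply_lt p _ (by simpa [negIdx] using h), repPerm_apply_lt p x h]
  · have hx : x = (p.1, x.2) := by
      refine Prod.ext (Fin.ext h) rfl
    rw [hx]
    show repPerm p (p.1, !x.2) = negIdx (repPerm p (p.1, x.2))
    rw [repPerm_apply_eq, repPerm_apply_eq]
    refine Prod.ext rfl ?_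
    show xor (!x.2) (!p.2) = !(xor x.2 (!p.2))
    cases x.2 <;> cases p.2 <;> rfl
  · rw [repPerm_apply_gt p _ (by simpa [negIdx] using h), repPerm_apply_gt p x h]
    rfl

theorem extendMid_apply_mid (σ : Equiv.Perm (SIdx m)) (a : SIdx m) :
    extendMid m σ ((a.1.castSucc, a.2) : SIdx (m + 1)) =
      ((σ a).1.castSucc, (σ a).2) := by
  have := Equiv.Perm.extendDomain_apply_image (e := σ) (f := midEquiv m) a
  simpa [extendMid, midEquiv] using this

theorem extendMid_apply_last (σ : Equiv.Perm (SIdx m)) (c : Bool) :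
    extendMid m σ (Fin.last m, c) = (Fin.last m, c) := by
  refine Equiv.Perm.extendDomain_apply_not_subtype _ _ ?_
  simp [Fin.last]

theorem extendMid_mem {σ : Equiv.Perm (SIdx m)} (hσ : σ ∈ hyperoctahedral m) :
    extendMid m σ ∈ hyperoctahedral (m + 1) := by
  intro x
  by_cases h : x.1.1 < m
  · set a : SIdx m := (⟨x.1.1, h⟩, x.2) with ha
    have hx : x = (a.1.castSucc, a.2) := by
      refine Prod.ext (Fin.ext rfl) rfl
    have hnx : negIdx ((a.1.castSucc, a.2) : SIdx (m + 1))
        = ((negIdx a).1.castSucc, (negIdx a).2) := rfl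
    rw [hx, hnx, extendMid_apply_mid, extendMid_apply_mid, hσ a]
    rfl
  · have hx : x = (Fin.last m, x.2) := by
      refine Prod.ext (Fin.ext (by have := x.1.isLt; simp [Fin.last]; omega)) rfl
    rw [hx]
    show extendMid m σ (Fin.last m, !x.2) = negIdx (extendMid m σ (Fin.last m, x.2))
    rw [extendMid_apply_last, extendMid_apply_last]
    rfl

theorem extendMid_mul (σ τ : Equiv.Perm (SIdx m)) :
    extendMid m (σ * τ) = extendMid m σ * extendMid m τ :=
  (Equiv.Perm.extendDomain_mul _ σ τ).symm

theorem sval_castSucc (a : SIdx m) :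
    sval ((a.1.castSucc, a.2) : SIdx (m + 1)) = sval a := by
  rcases a with ⟨i, c⟩; cases c <;> simp [sval]

theorem sval_lt (x : SIdx m) : sval x < (m : ℤ) + 1 := by
  rcases x with ⟨i, c⟩
  have := i.isLt
  cases c <;> simp [sval] <;> omega

theorem neg_lt_sval (x : SIdx m) : -((m : ℤ) + 1) < sval x := by
  rcases x with ⟨i, c⟩
  have := i.isLt
  cases c <;> simp [sval] <;> omega

end SymBAux

namespace SymBAux

variable {m : ℕ}

open Fin.NatCast in
theorem tauGen_succ_eq (j : ℕ) (hj : j + 1 ≤ m) :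
    tauGen (m + 1) (j + 1) =
      Equiv.swap ((⟨j, by omega⟩ : Fin (m + 1)), true) ((⟨j + 1, by omega⟩ : Fin (m + 1)), true) *
      Equiv.swap ((⟨j, by omega⟩ : Fin (m + 1)), false)
        ((⟨j + 1, by omega⟩ : Fin (m + 1)), false) := by
  have c1 : (((j + 1 - 1 : ℕ)) : Fin (m + 1)) = ⟨j, by omega⟩ :=
    Fin.ext (by rw [Fin.val_cast_of_lt (show j + 1 - 1 < m + 1 by omega)]; rfl)
  have c2 : (((j + 1 : ℕ)) : Fin (m + 1)) = ⟨j + 1, by omega⟩ :=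
    Fin.ext (Fin.val_cast_of_lt (by omega))
  rw [tauGen, if_neg (Nat.succ_ne_zero j), c1, c2]

theorem tauGen_succ_apply (j : ℕ) (hj : j + 1 ≤ m) (x : SIdx (m + 1)) :
    tauGen (m + 1) (j + 1) x =
      if x.1.1 = j then ((⟨j + 1, by omega⟩ : Fin (m + 1)), x.2)
      else if x.1.1 = j + 1 then ((⟨j, by omega⟩ : Fin (m + 1)), x.2)
      else x := by
  rw [tauGen_succ_eq j hj, Equiv.Perm.mul_apply, Equiv.swap_apply_def, Equiv.swap_apply_def]
  rcases x with ⟨⟨i, hi⟩, c⟩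
  split_ifs <;> simp_all [Prod.ext_iff, Fin.ext_iff] <;> omega

theorem tauGen_zero_apply (x : SIdx (m + 1)) :
    tauGen (m + 1) 0 x = if x.1.1 = 0 then (x.1, !x.2) else x := by
  rw [tauGen, if_pos rfl, Equiv.swap_apply_def]
  rcases x with ⟨⟨i, hi⟩, c⟩
  split_ifs <;> simp_all [Prod.ext_iff, Fin.ext_iff, Fin.val_zero] <;> omega

theorem repPerm_last_true : repPerm ((Fin.last m), true) = 1 := by
  apply Equiv.ext
  rintro ⟨⟨i, hi⟩, c⟩
  rcases eq_or_ne i m with h | h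
  · have e : ((⟨⟨i, hi⟩, c⟩ : SIdx (m + 1))) = ((Fin.last m, true).1, c) :=
      Prod.ext (Fin.ext (by simpa [Fin.last] using h)) rfl
    rw [e, repPerm_apply_eq]
    simp [Fin.last]
  · have him : i < m := by omega
    rw [repPerm_apply_lt _ _ (by simpa [Fin.last] using him)]
    rfl

theorem step_true (j : ℕ) (hj : j < m) :
    repPerm ((⟨j + 1, by omega⟩ : Fin (m + 1)), true) * tauGen (m + 1) (j + 1) =
      repPerm ((⟨j, by omega⟩ : Fin (m + 1)), true) := by
  apply Equiv.ext
  rintro ⟨⟨i, hi⟩, c⟩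
  rw [Equiv.Perm.mul_apply, tauGen_succ_apply j (by omega)]
  rcases eq_or_ne i j with h | h
  · rw [if_pos h]
    have e1 : ((⟨j + 1, by omega⟩ : Fin (m + 1)), c)
        = (((⟨j + 1, by omega⟩ : Fin (m + 1)), true).1, c) := rfl
    rw [e1, repPerm_apply_eq]
    have e2 : ((⟨⟨i, hi⟩, c⟩ : SIdx (m + 1)))
        = (((⟨j, by omega⟩ : Fin (m + 1)), true).1, c) := Prod.ext (Fin.ext h) rfl
    rw [e2, repPerm_apply_eq]
  · rcases eq_or_ne i (j + 1) with h' | h'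
    · rw [if_neg h, if_pos h']
      have hji : j < i := by omega
      rw [repPerm_apply_lt _ _ (Nat.lt_succ_self j), repPerm_apply_gt _ _ hji]
      exact Prod.ext (Fin.ext (show (j : ℕ) = i - 1 by omega)) rfl
    · rw [if_neg h, if_neg h']
      rcases lt_or_gt_of_ne h with hlt | hgt
      · rw [repPerm_apply_lt _ _ (by simp; omega), repPerm_apply_lt _ _ (by simp; omega)]
      · rw [repPerm_apply_gt _ _ (by simp; omega), repPerm_apply_gt _ _ (by simp; omega)]

theorem step_zero :
    repPerm ((⟨0, Nat.succ_pos m⟩ : Fin (m + 1)), true) * tauGen (m + 1) 0 =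
      repPerm ((⟨0, Nat.succ_pos m⟩ : Fin (m + 1)), false) := by
  apply Equiv.ext
  rintro ⟨⟨i, hi⟩, c⟩
  rw [Equiv.Perm.mul_apply, tauGen_zero_apply]
  rcases eq_or_ne i 0 with h | h
  · rw [if_pos h]
    have e1 : (((⟨⟨i, hi⟩, c⟩ : SIdx (m + 1)).1, !(⟨⟨i, hi⟩, c⟩ : SIdx (m + 1)).2))
        = (((⟨0, Nat.succ_pos m⟩ : Fin (m + 1)), true).1, !c) := Prod.ext (Fin.ext h) rfl
    rw [e1, repPerm_apply_eq]
    have e2 : ((⟨⟨i, hi⟩, c⟩ : SIdx (m + 1)))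
        = (((⟨0, Nat.succ_pos m⟩ : Fin (m + 1)), false).1, c) := Prod.ext (Fin.ext h) rfl
    rw [e2, repPerm_apply_eq]
    refine Prod.ext rfl ?_
    cases c <;> rfl
  · rw [if_neg h]
    have h0 : 0 < i := by omega
    rw [repPerm_apply_gt _ _ (by simpa using h0), repPerm_apply_gt _ _ (by simpa using h0)]

theorem step_false (k : ℕ) (hk : k < m) :
    repPerm ((⟨k, by omega⟩ : Fin (m + 1)), false) * tauGen (m + 1) (k + 1) =
      repPerm ((⟨k + 1, by omega⟩ : Fin (m + 1)), false) := by
  apply Equiv.ext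
  rintro ⟨⟨i, hi⟩, c⟩
  rw [Equiv.Perm.mul_apply, tauGen_succ_apply k (by omega)]
  rcases eq_or_ne i k with h | h
  · rw [if_pos h]
    rw [repPerm_apply_gt _ _ (by simp), repPerm_apply_lt _ _ (by simp; omega)]
    exact Prod.ext (Fin.ext (by simp [h])) rfl
  · rcases eq_or_ne i (k + 1) with h' | h'
    · rw [if_neg h, if_pos h']
      have e1 : ((⟨k, by omega⟩ : Fin (m + 1)), c)
          = (((⟨k, by omega⟩ : Fin (m + 1)), false).1, c) := rfl
      rw [e1, repPerm_apply_eq]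
      have e2 : ((⟨⟨i, hi⟩, c⟩ : SIdx (m + 1)))
          = (((⟨k + 1, by omega⟩ : Fin (m + 1)), false).1, c) := Prod.ext (Fin.ext h') rfl
      rw [e2, repPerm_apply_eq]
    · rw [if_neg h, if_neg h']
      rcases lt_or_gt_of_ne h with hlt | hgt
      · rw [repPerm_apply_lt _ _ (by simp; omega), repPerm_apply_lt _ _ (by simp; omega)]
      · rw [repPerm_apply_gt _ _ (by simp; omega), repPerm_apply_gt _ _ (by simp; omega)]

theorem step_true' (j t : ℕ) (hj : j < m) (ht : t = j + 1) :
    repPerm ((⟨t, by omega⟩ : Fin (m + 1)), true) * tauGen (m + 1) t =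
      repPerm ((⟨j, by omega⟩ : Fin (m + 1)), true) := by
  subst ht; exact step_true j hj

def Tperm (m k : ℕ) : Equiv.Perm (SIdx (m + 1)) :=
  ((List.range k).map fun j => tauGen (m + 1) (m - j)).prod

def Wperm (m k : ℕ) : Equiv.Perm (SIdx (m + 1)) :=
  ((List.range k).map fun j => tauGen (m + 1) (1 + j)).prod

theorem Tperm_eq (k : ℕ) (hk : k ≤ m) :
    Tperm m k = repPerm ((⟨m - k, by omega⟩ : Fin (m + 1)), true) := by
  induction k with
  | zero =>
    have : ((⟨m - 0, by omega⟩ : Fin (m + 1))) = Fin.last m :=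
      Fin.ext (show m - 0 = m by omega)
    rw [this, repPerm_last_true]
    rfl
  | succ k ih =>
    have hk' : k ≤ m := by omega
    have h1 : Tperm m (k + 1) = Tperm m k * tauGen (m + 1) (m - k) := by
      rw [Tperm, List.range_succ, List.map_append, List.prod_append]
      rfl
    rw [h1, ih hk']
    exact step_true' (m - (k + 1)) (m - k) (by omega) (by omega)

theorem Uperm_eq (k : ℕ) (hk : k ≤ m) :
    Tperm m m * tauGen (m + 1) 0 * Wperm m k
      = repPerm ((⟨k, by omega⟩ : Fin (m + 1)), false) := by
  induction k with
  | zero =>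
    have h0 : Wperm m 0 = 1 := rfl
    rw [h0, mul_one, Tperm_eq m le_rfl]
    have e : ((⟨m - m, by omega⟩ : Fin (m + 1))) = ⟨0, Nat.succ_pos m⟩ :=
      Fin.ext (show m - m = 0 by omega)
    rw [e]
    exact step_zero
  | succ k ih =>
    have hk' : k ≤ m := by omega
    have h1 : Wperm m (k + 1) = Wperm m k * tauGen (m + 1) (1 + k) := by
      rw [Wperm, List.range_succ, List.map_append, List.prod_append]
      rfl
    rw [h1, ← mul_assoc, ih hk']
    have h2 : 1 + k = k + 1 := by omega
    rw [h2]
    exact step_false k (by omega)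

end SymBAux

namespace SymBAux

variable {m : ℕ}

open Fin.NatCast in
theorem natCast_fin_eq (t : ℕ) (h : t < m + 1) :
    ((t : ℕ) : Fin (m + 1)) = ⟨t, h⟩ :=
  Fin.ext (Fin.val_cast_of_lt (by omega))

open Fin.NatCast in
theorem Tperm_eq' (k : ℕ) (hk : k ≤ m) :
    Tperm m k = repPerm ((((m - k : ℕ)) : Fin (m + 1)), true) := by
  rw [Tperm_eq k hk, natCast_fin_eq (m - k) (by omega)]

open Fin.NatCast in
theorem Uperm_eq' (k : ℕ) (hk : k ≤ m) :
    Tperm m m * tauGen (m + 1) 0 * Wperm m k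
      = repPerm ((((k : ℕ)) : Fin (m + 1)), false) := by
  rw [Uperm_eq k hk, natCast_fin_eq k (by omega)]

/-- the coefficient of the representative indexed by `p`. -/
def coeff (m : ℕ) (α q : ℝ) (p : SIdx (m + 1)) : ℂ :=
  if p.2 then (q : ℂ) ^ (m - p.1.1) else (α : ℂ) * (q : ℂ) ^ (m + p.1.1)

variable (H : Type*) [NormedAddCommGroup H] [InnerProductSpace ℂ H]

theorem prod_tauEnd_T (k : ℕ) :
    ((List.range k).map fun j => tauEnd H (m + 1) (m - j)).prod
      = (permB H (Tperm m k)).toLinearMap := by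
  have h1 : ((List.range k).map fun j => tauEnd H (m + 1) (m - j))
      = (((List.range k).map fun j => tauGen (m + 1) (m - j)).map (PB H (m + 1))) := by
    rw [List.map_map]; rfl
  rw [h1, ← map_list_prod (PB H (m + 1))]; rfl

theorem prod_tauEnd_W (k : ℕ) :
    ((List.range k).map fun j => tauEnd H (m + 1) (1 + j)).prod
      = (permB H (Wperm m k)).toLinearMap := by
  have h1 : ((List.range k).map fun j => tauEnd H (m + 1) (1 + j))
      = (((List.range k).map fun j => tauGen (m + 1) (1 + j)).map (PB H (m + 1))) := by
    rw [List.map_map]; rfl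
  rw [h1, ← map_list_prod (PB H (m + 1))]; rfl

theorem range_succ_eq_insert : Finset.range (m + 1) = insert 0 (Finset.Icc 1 m) := by
  ext t; simp [Finset.mem_range, Finset.mem_Icc, Finset.mem_insert]; omega

open Fin.NatCast in
theorem Rop_eq (α q : ℝ) :
    Rop H m α q = ∑ p : SIdx (m + 1),
      coeff m α q p • (permB H (repPerm p)).toLinearMap := by
  classical
  set FT : ℕ → Module.End ℂ (KSp H (m + 1)) :=
    fun t => (q : ℂ) ^ (m - t) •
      (permB H (repPerm (((t : ℕ) : Fin (m + 1)), true))).toLinearMap with hFT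
  set FF : ℕ → Module.End ℂ (KSp H (m + 1)) :=
    fun t => ((α : ℂ) * (q : ℂ) ^ (m + t)) •
      (permB H (repPerm (((t : ℕ) : Fin (m + 1)), false))).toLinearMap with hFF
  have baseT : FT m = 1 := by
    rw [hFT]
    simp only
    rw [Nat.sub_self, pow_zero, one_smul, natCast_fin_eq m (by omega),
      show (⟨m, by omega⟩ : Fin (m + 1)) = Fin.last m from rfl, repPerm_last_true, permB_one]
  have key1 : (1 : Module.End ℂ (KSp H (m + 1)))
      + (∑ k ∈ Finset.Icc 1 m,
        (q : ℂ) ^ k • ((List.range k).map fun j => tauEnd H (m + 1) (m - j)).prod)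
      = ∑ t ∈ Finset.range (m + 1), FT t := by
    have hs : ∑ k ∈ Finset.Icc 1 m,
        (q : ℂ) ^ k • ((List.range k).map fun j => tauEnd H (m + 1) (m - j)).prod
        = ∑ k ∈ Finset.Icc 1 m, FT (m - k) := by
      refine Finset.sum_congr rfl fun k hk => ?_
      rw [Finset.mem_Icc] at hk
      rw [prod_tauEnd_T, Tperm_eq' k hk.2, hFT]
      simp only
      rw [show m - (m - k) = k from by omega]
    have hins : ∑ t ∈ Finset.range (m + 1), FT (m - t)
        = FT (m - 0) + ∑ t ∈ Finset.Icc 1 m, FT (m - t) := by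
      rw [range_succ_eq_insert, Finset.sum_insert (by simp)]
    have hrefl2 : ∑ t ∈ Finset.range (m + 1), FT (m - t)
        = ∑ t ∈ Finset.range (m + 1), FT t := by
      have := Finset.sum_range_reflect FT (m + 1)
      simpa using this
    rw [hs, ← hrefl2, hins, show m - 0 = m from rfl, baseT]
  have key2 : ((α : ℂ) * (q : ℂ) ^ m) •
        (((List.range m).map fun j => tauEnd H (m + 1) (m - j)).prod * tauEnd H (m + 1) 0 *
          (1 + ∑ k ∈ Finset.Icc 1 m,
            (q : ℂ) ^ k • ((List.range k).map fun j => tauEnd H (m + 1) (1 + j)).prod))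
      = ∑ t ∈ Finset.range (m + 1), FF t := by
    have hA : ((List.range m).map fun j => tauEnd H (m + 1) (m - j)).prod * tauEnd H (m + 1) 0
        = (permB H (Tperm m m * tauGen (m + 1) 0)).toLinearMap := by
      rw [prod_tauEnd_T, tauEnd_eq, permB_mul]; rfl
    have hAW : ∀ k : ℕ,
        (permB H (Tperm m m * tauGen (m + 1) 0)).toLinearMap
            * (permB H (Wperm m k)).toLinearMap
          = (permB H (Tperm m m * tauGen (m + 1) 0 * Wperm m k)).toLinearMap := by
      intro k
      exact (permB_mul H _ _).symm
    have expand : (((List.range m).map fun j => tauEnd H (m + 1) (m - j)).prod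
          * tauEnd H (m + 1) 0 *
          (1 + ∑ k ∈ Finset.Icc 1 m,
            (q : ℂ) ^ k • ((List.range k).map fun j => tauEnd H (m + 1) (1 + j)).prod))
        = ∑ t ∈ Finset.range (m + 1),
            (q : ℂ) ^ t •
              (permB H (Tperm m m * tauGen (m + 1) 0 * Wperm m t)).toLinearMap := by
      rw [hA, mul_add, mul_one, Finset.mul_sum]
      rw [range_succ_eq_insert, Finset.sum_insert (by simp)]
      congr 1
      · rw [pow_zero, one_smul, show Wperm m 0 = 1 from rfl, mul_one]
      · refine Finset.sum_congr rfl fun k _ => ?_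
        rw [prod_tauEnd_W, mul_smul_comm, hAW]
    rw [expand, Finset.smul_sum]
    refine Finset.sum_congr rfl fun t ht => ?_
    rw [Finset.mem_range] at ht
    rw [Uperm_eq' t (by omega), smul_smul, hFF]
    simp only
    rw [mul_assoc, ← pow_add]
  have target : (∑ p : SIdx (m + 1),
        coeff m α q p • (permB H (repPerm p)).toLinearMap)
      = ∑ t ∈ Finset.range (m + 1), FT t + ∑ t ∈ Finset.range (m + 1), FF t := by
    rw [Fintype.sum_prod_type]
    have hb : ∀ j : Fin (m + 1),
        (∑ b : Bool, coeff m α q (j, b) • (permB H (repPerm (j, b))).toLinearMap)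
          = FT j.1 + FF j.1 := by
      intro j
      rw [Fintype.sum_bool, hFT, hFF]
      simp only
      rw [Fin.cast_val_eq_self j]
      rw [show coeff m α q (j, true) = (q : ℂ) ^ (m - j.1) from rfl,
        show coeff m α q (j, false) = (α : ℂ) * (q : ℂ) ^ (m + j.1) from rfl]
    rw [Finset.sum_congr rfl fun j _ => hb j, Finset.sum_add_distrib]
    congr 1
    · rw [← Fin.sum_univ_eq_sum_range FT (m + 1)]
    · rw [← Fin.sum_univ_eq_sum_range FF (m + 1)]
  rw [Rop, target, key1, key2]

end SymBAux

namespace SymBAux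

variable {m n : ℕ}

theorem sval_negIdx (x : SIdx n) : sval (negIdx x) = - sval x := by
  rcases x with ⟨i, c⟩; cases c <;> simp [sval, negIdx]

theorem sval_perm_false (τ : Equiv.Perm (SIdx n)) (hτ : τ ∈ hyperoctahedral n) (i : Fin n) :
    sval (τ (i, false)) = - sval (τ (i, true)) := by
  have h := hτ (i, true)
  have e : negIdx ((i, true) : SIdx n) = (i, false) := rfl
  rw [e] at h
  rw [h, sval_negIdx]

theorem succAbove_val (j : Fin (m + 1)) (a : Fin m) :
    (j.succAbove a).1 = if a.1 < j.1 then a.1 else a.1 + 1 := by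
  rw [Fin.succAbove]
  by_cases h : a.1 < j.1
  · rw [if_pos (show a.castSucc < j from h), if_pos h]; rfl
  · rw [if_neg (show ¬ a.castSucc < j from h), if_neg h]; rfl

theorem lt_succAbove_iff' (j : Fin (m + 1)) (a : Fin m) :
    j < j.succAbove a ↔ j.1 ≤ a.1 := by
  rw [Fin.lt_def, succAbove_val]
  split_ifs with h <;> omega

theorem succAbove_lt_iff' (j : Fin (m + 1)) (a : Fin m) :
    j.succAbove a < j ↔ a.1 < j.1 := by
  rw [Fin.lt_def, succAbove_val]
  split_ifs with h <;> omega

theorem succAbove_lt_succAbove_iff' (j : Fin (m + 1)) (a a' : Fin m) :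
    j.succAbove a < j.succAbove a' ↔ a < a' := by
  rw [Fin.lt_def, Fin.lt_def, succAbove_val, succAbove_val]
  split_ifs <;> omega

theorem count_ge (t : ℕ) : (∑ a : Fin m, if t ≤ a.1 then 1 else 0) = m - t := by
  rw [Fin.sum_univ_eq_sum_range (fun x => if t ≤ x then 1 else 0) m,
    ← Finset.card_filter]
  have : (Finset.range m).filter (fun x => t ≤ x) = Finset.Ico t m := by
    ext x; simp [Finset.mem_Ico]; omega
  rw [this, Nat.card_Ico]

theorem count_lt (t : ℕ) (ht : t ≤ m) : (∑ a : Fin m, if a.1 < t then 1 else 0) = t := by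
  rw [Fin.sum_univ_eq_sum_range (fun x => if x < t then 1 else 0) m,
    ← Finset.card_filter]
  have : (Finset.range m).filter (fun x => x < t) = Finset.range t := by
    ext x; simp; omega
  rw [this, Finset.card_range]

theorem ninv_as_sum (τ : Equiv.Perm (SIdx n)) :
    ninv τ = ∑ i : Fin n, if sval (τ (i, true)) < 0 then 1 else 0 := by
  rw [ninv, Finset.card_filter]

theorem pinv_as_sum (τ : Equiv.Perm (SIdx n)) (hτ : τ ∈ hyperoctahedral n) :
    pinv τ =
      (∑ i : Fin n, ∑ i' : Fin n,
        if i < i' ∧ sval (τ (i', true)) < sval (τ (i, true)) then 1 else 0) +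
      (∑ i : Fin n, ∑ i' : Fin n,
        if i < i' ∧ sval (τ (i, true)) < - sval (τ (i', true)) then 1 else 0) := by
  rw [pinv, Finset.card_filter, Finset.card_filter]
  congr 1
  · rw [← Fintype.sum_prod_type']
  · rw [← Fintype.sum_prod_type']
    refine Finset.sum_congr rfl fun ij _ => ?_
    rw [sval_perm_false τ hτ ij.2]

theorem double_succAbove (j : Fin (m + 1)) (f : Fin (m + 1) → Fin (m + 1) → ℕ) :
    (∑ i : Fin (m + 1), ∑ i' : Fin (m + 1), f i i')
      = f j j + (∑ a : Fin m, f j (j.succAbove a)) + (∑ a : Fin m, f (j.succAbove a) j)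
        + ∑ a : Fin m, ∑ a' : Fin m, f (j.succAbove a) (j.succAbove a') := by
  rw [Fin.sum_univ_succAbove (fun i => ∑ i' : Fin (m + 1), f i i') j,
    Fin.sum_univ_succAbove (fun i' => f j i') j]
  have h : ∀ a : Fin m, (∑ i' : Fin (m + 1), f (j.succAbove a) i')
      = f (j.succAbove a) j + ∑ a' : Fin m, f (j.succAbove a) (j.succAbove a') :=
    fun a => Fin.sum_univ_succAbove (fun i' => f (j.succAbove a) i') j
  rw [Finset.sum_congr rfl fun a _ => h a, Finset.sum_add_distrib]
  ring

section window

variable (σ : Equiv.Perm (SIdx m)) (p : SIdx (m + 1))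

theorem win_succAbove (a : Fin m) (c : Bool) :
    (extendMid m σ * repPerm p) (p.1.succAbove a, c)
      = ((σ (a, c)).1.castSucc, (σ (a, c)).2) := by
  rw [Equiv.Perm.mul_apply]
  by_cases h : a.1 < p.1.1
  · have h1 : p.1.succAbove a = a.castSucc := Fin.succAbove_of_castSucc_lt _ _ h
    rw [h1, repPerm_apply_lt _ _ h]
    exact extendMid_apply_mid σ (a, c)
  · have h2 : p.1.succAbove a = a.succ := by
      rw [Fin.succAbove]
      split_ifs with hh
      · exact absurd hh h
      · rfl
    rw [h2, repPerm_apply_gt _ _ (show p.1.1 < a.1 + 1 by omega)]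
    exact extendMid_apply_mid σ (a, c)

theorem sval_winA (a : Fin m) :
    sval ((extendMid m σ * repPerm p) (p.1.succAbove a, true)) = sval (σ (a, true)) := by
  rw [win_succAbove]
  exact sval_castSucc (σ (a, true))

theorem win_center (c : Bool) :
    (extendMid m σ * repPerm p) (p.1, c) = (Fin.last m, xor c (!p.2)) := by
  rw [Equiv.Perm.mul_apply, repPerm_apply_eq, extendMid_apply_last]

theorem sval_center_true (hp : p.2 = true) :
    sval ((extendMid m σ * repPerm p) (p.1, true)) = (m : ℤ) + 1 := by
  rw [win_center, hp]
  simp [sval, Fin.last]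

theorem sval_center_false (hp : p.2 = false) :
    sval ((extendMid m σ * repPerm p) (p.1, true)) = -((m : ℤ) + 1) := by
  rw [win_center, hp]
  simp [sval, Fin.last]

theorem ninv_mul (p : SIdx (m + 1)) :
    ninv (extendMid m σ * repPerm p) = ninv σ + (if p.2 then 0 else 1) := by
  rw [ninv_as_sum, ninv_as_sum]
  rw [Fin.sum_univ_succAbove
    (fun i => if sval ((extendMid m σ * repPerm p) (i, true)) < 0 then 1 else 0) p.1]
  have hc : (if sval ((extendMid m σ * repPerm p) (p.1, true)) < 0 then 1 else 0)
      = (if p.2 then 0 else 1) := by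
    rcases hp : p.2 with _ | _
    · rw [sval_center_false σ p hp, if_pos (by omega)]
      simp
    · rw [sval_center_true σ p hp, if_neg (by omega)]
      simp
  have hr : ∀ a : Fin m,
      (if sval ((extendMid m σ * repPerm p) (p.1.succAbove a, true)) < 0 then 1 else 0)
        = (if sval (σ (a, true)) < 0 then 1 else 0) := fun a => by rw [sval_winA]
  rw [hc, Finset.sum_congr rfl fun a _ => hr a]
  omega

end window

end SymBAux

namespace SymBAux

variable {m : ℕ}

theorem pinv_mul (σ : Equiv.Perm (SIdx m)) (hσ : σ ∈ hyperoctahedral m) (p : SIdx (m + 1)) :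
    pinv (extendMid m σ * repPerm p)
      = pinv σ + (if p.2 then m - p.1.1 else m + p.1.1) := by
  classical
  have hπ : extendMid m σ * repPerm p ∈ hyperoctahedral (m + 1) :=
    Subgroup.mul_mem _ (extendMid_mem hσ) (repPerm_mem p)
  rw [pinv_as_sum _ hπ, pinv_as_sum _ hσ]
  set W : Fin (m + 1) → ℤ := fun i => sval ((extendMid m σ * repPerm p) (i, true)) with hWdef
  set v : Fin m → ℤ := fun a => sval (σ (a, true)) with hvdef
  have hWa : ∀ a : Fin m, W (p.1.succAbove a) = v a := fun a => sval_winA σ p a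
  have hvlt : ∀ a : Fin m, v a < (m : ℤ) + 1 := fun a => sval_lt (σ (a, true))
  have hvgt : ∀ a : Fin m, -((m : ℤ) + 1) < v a := fun a => neg_lt_sval (σ (a, true))
  have hjm : p.1.1 ≤ m := by have := p.1.isLt; omega
  rw [double_succAbove p.1 (fun i i' => if i < i' ∧ W i' < W i then 1 else 0),
    double_succAbove p.1 (fun i i' => if i < i' ∧ W i < - W i' then 1 else 0)]
  have hQ4 : (∑ a : Fin m, ∑ a' : Fin m,
      if p.1.succAbove a < p.1.succAbove a' ∧ W (p.1.succAbove a') < W (p.1.succAbove a)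
      then 1 else 0)
      = ∑ a : Fin m, ∑ a' : Fin m, if a < a' ∧ v a' < v a then 1 else 0 := by
    refine Finset.sum_congr rfl fun a _ => Finset.sum_congr rfl fun a' _ => ?_
    by_cases hc : a < a' ∧ v a' < v a
    · rw [if_pos ⟨(succAbove_lt_succAbove_iff' p.1 a a').mpr hc.1,
        by rw [hWa, hWa]; exact hc.2⟩, if_pos hc]
    · refine (if_neg fun hcon => hc ⟨(succAbove_lt_succAbove_iff' p.1 a a').mp hcon.1, ?_⟩).trans
        (if_neg hc).symm
      have := hcon.2
      rwa [hWa, hWa] at this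
  have hR4 : (∑ a : Fin m, ∑ a' : Fin m,
      if p.1.succAbove a < p.1.succAbove a' ∧ W (p.1.succAbove a) < - W (p.1.succAbove a')
      then 1 else 0)
      = ∑ a : Fin m, ∑ a' : Fin m, if a < a' ∧ v a < - v a' then 1 else 0 := by
    refine Finset.sum_congr rfl fun a _ => Finset.sum_congr rfl fun a' _ => ?_
    by_cases hc : a < a' ∧ v a < - v a'
    · rw [if_pos ⟨(succAbove_lt_succAbove_iff' p.1 a a').mpr hc.1,
        by rw [hWa, hWa]; exact hc.2⟩, if_pos hc]
    · refine (if_neg fun hcon => hc ⟨(succAbove_lt_succAbove_iff' p.1 a a').mp hcon.1, ?_⟩).trans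
        (if_neg hc).symm
      have := hcon.2
      rwa [hWa, hWa] at this
  have hdiag1 : (if p.1 < p.1 ∧ W p.1 < W p.1 then 1 else 0) = 0 :=
    if_neg fun hcon => lt_irrefl _ hcon.1
  have hdiag2 : (if p.1 < p.1 ∧ W p.1 < - W p.1 then 1 else 0) = 0 :=
    if_neg fun hcon => lt_irrefl _ hcon.1
  rcases hp : p.2 with _ | _
  · -- p.2 = false : center value is -(m+1)
    have hWc : W p.1 = -((m : ℤ) + 1) := sval_center_false σ p hp
    have hQ2 : (∑ a : Fin m, if p.1 < p.1.succAbove a ∧ W (p.1.succAbove a) < W p.1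
        then 1 else 0) = 0 := by
      refine Finset.sum_eq_zero fun a _ => if_neg fun hcon => ?_
      have := hcon.2
      rw [hWa, hWc] at this
      exact absurd this (not_lt.mpr (le_of_lt (hvgt a)))
    have hQ3 : (∑ a : Fin m, if p.1.succAbove a < p.1 ∧ W p.1 < W (p.1.succAbove a)
        then 1 else 0) = p.1.1 := by
      have : ∀ a : Fin m, (if p.1.succAbove a < p.1 ∧ W p.1 < W (p.1.succAbove a) then 1 else 0)
          = if a.1 < p.1.1 then 1 else 0 := by
        intro a
        by_cases hc : a.1 < p.1.1
        · rw [if_pos ⟨(succAbove_lt_iff' p.1 a).mpr hc,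
            by rw [hWa, hWc]; exact hvgt a⟩, if_pos hc]
        · exact (if_neg fun hcon => hc ((succAbove_lt_iff' p.1 a).mp hcon.1)).trans
            (if_neg hc).symm
      rw [Finset.sum_congr rfl fun a _ => this a, count_lt p.1.1 hjm]
    have hR2 : (∑ a : Fin m, if p.1 < p.1.succAbove a ∧ W p.1 < - W (p.1.succAbove a)
        then 1 else 0) = m - p.1.1 := by
      have : ∀ a : Fin m, (if p.1 < p.1.succAbove a ∧ W p.1 < - W (p.1.succAbove a) then 1 else 0)
          = if p.1.1 ≤ a.1 then 1 else 0 := by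
        intro a
        by_cases hc : p.1.1 ≤ a.1
        · rw [if_pos ⟨(lt_succAbove_iff' p.1 a).mpr hc,
            by rw [hWa, hWc]; have := hvlt a; omega⟩, if_pos hc]
        · exact (if_neg fun hcon => hc ((lt_succAbove_iff' p.1 a).mp hcon.1)).trans
            (if_neg hc).symm
      rw [Finset.sum_congr rfl fun a _ => this a, count_ge p.1.1]
    have hR3 : (∑ a : Fin m, if p.1.succAbove a < p.1 ∧ W (p.1.succAbove a) < - W p.1
        then 1 else 0) = p.1.1 := by
      have : ∀ a : Fin m, (if p.1.succAbove a < p.1 ∧ W (p.1.succAbove a) < - W p.1 then 1 else 0)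
          = if a.1 < p.1.1 then 1 else 0 := by
        intro a
        by_cases hc : a.1 < p.1.1
        · rw [if_pos ⟨(succAbove_lt_iff' p.1 a).mpr hc,
            by rw [hWa, hWc]; have := hvlt a; omega⟩, if_pos hc]
        · exact (if_neg fun hcon => hc ((succAbove_lt_iff' p.1 a).mp hcon.1)).trans
            (if_neg hc).symm
      rw [Finset.sum_congr rfl fun a _ => this a, count_lt p.1.1 hjm]
    rw [hdiag1, hdiag2, hQ2, hQ3, hQ4, hR2, hR3, hR4,
      if_neg (show ¬ (false = true) by simp)]
    simp only [hvdef]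
    omega
  · -- p.2 = true : center value is m+1
    have hWc : W p.1 = (m : ℤ) + 1 := sval_center_true σ p hp
    have hQ2 : (∑ a : Fin m, if p.1 < p.1.succAbove a ∧ W (p.1.succAbove a) < W p.1
        then 1 else 0) = m - p.1.1 := by
      have : ∀ a : Fin m, (if p.1 < p.1.succAbove a ∧ W (p.1.succAbove a) < W p.1 then 1 else 0)
          = if p.1.1 ≤ a.1 then 1 else 0 := by
        intro a
        by_cases hc : p.1.1 ≤ a.1
        · rw [if_pos ⟨(lt_succAbove_iff' p.1 a).mpr hc,
            by rw [hWa, hWc]; exact hvlt a⟩, if_pos hc]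
        · exact (if_neg fun hcon => hc ((lt_succAbove_iff' p.1 a).mp hcon.1)).trans
            (if_neg hc).symm
      rw [Finset.sum_congr rfl fun a _ => this a, count_ge p.1.1]
    have hQ3 : (∑ a : Fin m, if p.1.succAbove a < p.1 ∧ W p.1 < W (p.1.succAbove a)
        then 1 else 0) = 0 := by
      refine Finset.sum_eq_zero fun a _ => if_neg fun hcon => ?_
      have := hcon.2
      rw [hWa, hWc] at this
      exact absurd this (not_lt.mpr (le_of_lt (hvlt a)))
    have hR2 : (∑ a : Fin m, if p.1 < p.1.succAbove a ∧ W p.1 < - W (p.1.succAbove a)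
        then 1 else 0) = 0 := by
      refine Finset.sum_eq_zero fun a _ => if_neg fun hcon => ?_
      have := hcon.2
      rw [hWa, hWc] at this
      have := hvgt a
      omega
    have hR3 : (∑ a : Fin m, if p.1.succAbove a < p.1 ∧ W (p.1.succAbove a) < - W p.1
        then 1 else 0) = 0 := by
      refine Finset.sum_eq_zero fun a _ => if_neg fun hcon => ?_
      have := hcon.2
      rw [hWa, hWc] at this
      have := hvgt a
      omega
    rw [hdiag1, hdiag2, hQ2, hQ3, hQ4, hR2, hR3, hR4, if_pos rfl]
    simp only [hvdef]
    omega

end SymBAux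

namespace SymBAux

variable {m : ℕ}

theorem repPerm_apply_self (p : SIdx (m + 1)) : repPerm p p = (Fin.last m, true) := by
  have h : repPerm p (p.1, p.2) = (Fin.last m, xor p.2 (!p.2)) := repPerm_apply_eq p p.2
  rw [show (p.1, p.2) = p from rfl] at h
  rw [h]
  cases hp : p.2 <;> simp

theorem inv_last (σ : Equiv.Perm (SIdx m)) (p : SIdx (m + 1)) :
    (extendMid m σ * repPerm p)⁻¹ (Fin.last m, true) = p := by
  rw [mul_inv_rev, Equiv.Perm.mul_apply]
  have h1 : (extendMid m σ)⁻¹ (Fin.last m, true) = (Fin.last m, true) := by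
    conv_lhs => rw [← extendMid_apply_last σ true]
    exact Equiv.symm_apply_apply _ _
  rw [h1]
  conv_lhs => rw [← repPerm_apply_self p]
  exact Equiv.symm_apply_apply _ _

theorem extendMid_injective : Function.Injective (extendMid m) := by
  intro σ σ' h
  apply Equiv.ext
  intro a
  have h1 := extendMid_apply_mid σ a
  rw [h] at h1
  rw [extendMid_apply_mid σ' a] at h1
  have h2 : (σ' a).1.castSucc = (σ a).1.castSucc := congrArg Prod.fst h1
  refine Prod.ext (Fin.ext ?_) (congrArg Prod.snd h1).symm
  have := congrArg Fin.val h2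
  simpa using this.symm

/-- the map realizing the coset decomposition. -/
def phi (x : hyperoctahedral m × SIdx (m + 1)) : hyperoctahedral (m + 1) :=
  ⟨extendMid m (x.1 : Equiv.Perm (SIdx m)) * repPerm x.2,
    Subgroup.mul_mem _ (extendMid_mem x.1.2) (repPerm_mem x.2)⟩

theorem phi_injective : Function.Injective (phi (m := m)) := by
  rintro ⟨σ, p⟩ ⟨σ', p'⟩ h
  have hE : extendMid m (σ : Equiv.Perm (SIdx m)) * repPerm p
      = extendMid m (σ' : Equiv.Perm (SIdx m)) * repPerm p' := congrArg Subtype.val h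
  have hp : p = p' := by
    have h1 := inv_last (σ : Equiv.Perm (SIdx m)) p
    rw [hE] at h1
    rw [inv_last] at h1
    exact h1.symm
  subst hp
  have hσ : (σ : Equiv.Perm (SIdx m)) = (σ' : Equiv.Perm (SIdx m)) :=
    extendMid_injective (mul_right_cancel hE)
  exact Prod.ext (Subtype.ext hσ) rfl

theorem phi_surjective : Function.Surjective (phi (m := m)) := by
  rintro ⟨π, hπ⟩
  set p : SIdx (m + 1) := π⁻¹ (Fin.last m, true) with hpdef
  set ρ : Equiv.Perm (SIdx (m + 1)) := π * (repPerm p)⁻¹ with hρdef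
  have hρmem : ρ ∈ hyperoctahedral (m + 1) :=
    Subgroup.mul_mem _ hπ (Subgroup.inv_mem _ (repPerm_mem p))
  have hρlast_t : ρ (Fin.last m, true) = (Fin.last m, true) := by
    rw [hρdef, Equiv.Perm.mul_apply]
    have h2 : (repPerm p)⁻¹ (Fin.last m, true) = p := by
      conv_lhs => rw [← repPerm_apply_self p]
      exact Equiv.symm_apply_apply _ _
    rw [h2, hpdef]
    exact Equiv.apply_symm_apply _ _
  have hρlast_f : ρ (Fin.last m, false) = (Fin.last m, false) := by
    have := hρmem (Fin.last m, true)
    rw [show negIdx ((Fin.last m, true) : SIdx (m + 1)) = (Fin.last m, false) from rfl,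
      hρlast_t] at this
    rw [this]
    rfl
  have hlast_eq : ∀ x : SIdx (m + 1), ¬ x.1.1 < m → x = (Fin.last m, x.2) := by
    intro x hx
    have := x.1.isLt
    exact Prod.ext (Fin.ext (by simp [Fin.last]; omega)) rfl
  have hρfix : ∀ b : Bool, ρ (Fin.last m, b) = (Fin.last m, b) := by
    intro b; cases b
    · exact hρlast_f
    · exact hρlast_t
  have hpred : ∀ x : SIdx (m + 1), x.1.1 < m ↔ (ρ x).1.1 < m := by
    intro x
    constructor
    · intro hx
      by_contra hc
      have h1 : ρ x = (Fin.last m, (ρ x).2) := hlast_eq _ hc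
      have h2 : ρ (Fin.last m, (ρ x).2) = (Fin.last m, (ρ x).2) := hρfix _
      have : ρ x = ρ (Fin.last m, (ρ x).2) := by rw [h2, ← h1]
      have hx2 : x = (Fin.last m, (ρ x).2) := ρ.injective this
      rw [hx2] at hx
      simp [Fin.last] at hx
    · intro hx
      by_contra hc
      have h1 : x = (Fin.last m, x.2) := hlast_eq _ hc
      rw [h1, hρfix] at hx
      simp [Fin.last] at hx
  set τ : Equiv.Perm {x : SIdx (m + 1) // (x.1 : ℕ) < m} := ρ.subtypePerm (fun x => (hpred x).symm) with hτ
  set σ0 : Equiv.Perm (SIdx m) := ((midEquiv m).permCongr).symm τ with hσ0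
  have hσ0app : ∀ a : SIdx m, σ0 a = (midEquiv m).symm (τ (midEquiv m a)) := by
    intro a
    rw [hσ0, Equiv.permCongr_symm, Equiv.permCongr_apply, Equiv.symm_symm]
  have hext : extendMid m σ0 = ρ := by
    apply Equiv.ext
    intro x
    by_cases hx : x.1.1 < m
    · set a : SIdx m := (⟨x.1.1, hx⟩, x.2) with ha
      have hxa : x = (a.1.castSucc, a.2) := Prod.ext (Fin.ext rfl) rfl
      have hma : ((midEquiv m a) : SIdx (m + 1)) = (a.1.castSucc, a.2) := rfl
      rw [hxa, extendMid_apply_mid, hσ0app a]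
      have h3 : τ (midEquiv m a) = ⟨ρ ((midEquiv m a) : SIdx (m + 1)), _⟩ := rfl
      have h4 : ((midEquiv m ((midEquiv m).symm (τ (midEquiv m a)))) : SIdx (m + 1))
          = ((τ (midEquiv m a)) : SIdx (m + 1)) := by
        rw [Equiv.apply_symm_apply]
      have h5 : ((σ0 a).1.castSucc, (σ0 a).2) = ((midEquiv m (σ0 a)) : SIdx (m + 1)) := rfl
      rw [hσ0app a] at h5
      rw [h5, h4, h3]
      rfl
    · have h1 : x = (Fin.last m, x.2) := hlast_eq _ hx
      rw [h1, extendMid_apply_last, hρfix]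
  have hσ0mem : σ0 ∈ hyperoctahedral m := by
    intro a
    have h1 := extendMid_apply_mid σ0 (negIdx a)
    have h2 := extendMid_apply_mid σ0 a
    rw [hext] at h1 h2
    have h3 : (((negIdx a).1.castSucc, (negIdx a).2) : SIdx (m + 1))
        = negIdx ((a.1.castSucc, a.2) : SIdx (m + 1)) := rfl
    rw [h3, hρmem _, h2] at h1
    have h4 : negIdx (((σ0 a).1.castSucc, (σ0 a).2) : SIdx (m + 1))
        = ((negIdx (σ0 a)).1.castSucc, (negIdx (σ0 a)).2) := rfl
    rw [h4] at h1
    show σ0 (negIdx a) = negIdx (σ0 a)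
    have hval : ((σ0 (negIdx a)).1 : ℕ) = ((negIdx (σ0 a)).1 : ℕ) := by
      have := congrArg (fun y : SIdx (m + 1) => (y.1 : ℕ)) h1
      simpa using this.symm
    have hsnd : (σ0 (negIdx a)).2 = (negIdx (σ0 a)).2 := by
      have := congrArg (fun y : SIdx (m + 1) => y.2) h1
      simpa using this.symm
    exact Prod.ext (Fin.ext hval) hsnd
  refine ⟨(⟨⟨σ0, hσ0mem⟩, p⟩ : hyperoctahedral m × SIdx (m + 1)), ?_⟩
  apply Subtype.ext
  show extendMid m σ0 * repPerm p = π
  rw [hext, hρdef]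
  exact inv_mul_cancel_right π (repPerm p)

theorem phi_bijective : Function.Bijective (phi (m := m)) :=
  ⟨phi_injective, phi_surjective⟩

end SymBAux

namespace SymBAux

variable {m : ℕ}

theorem coeff_phi (α q : ℝ) (σ : hyperoctahedral m) (p : SIdx (m + 1)) :
    ((α : ℂ) ^ ninv (extendMid m (σ : Equiv.Perm (SIdx m)) * repPerm p))
        * ((q : ℂ) ^ pinv (extendMid m (σ : Equiv.Perm (SIdx m)) * repPerm p))
      = (((α : ℂ) ^ ninv (σ : Equiv.Perm (SIdx m)))
          * ((q : ℂ) ^ pinv (σ : Equiv.Perm (SIdx m)))) * coeff m α q p := by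
  rw [ninv_mul, pinv_mul _ σ.2 p, coeff]
  rcases hp : p.2 with _ | _ <;> simp [pow_add] <;> ring

end SymBAux

open SymBAux in
theorem symB_factorization' (m : ℕ) (α q : ℝ) :
    symB H (m + 1) α q = midSym H m α q * Rop H m α q := by
  classical
  rw [midSym, Rop_eq, Finset.sum_mul_sum]
  have step1 : ∀ (σ : hyperoctahedral m) (p : SIdx (m + 1)),
      ((((α : ℂ) ^ ninv (σ : Equiv.Perm (SIdx m))) * ((q : ℂ) ^ pinv (σ : Equiv.Perm (SIdx m)))) •
        (permB H (extendMid m (σ : Equiv.Perm (SIdx m)))).toLinearMap)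
        * (coeff m α q p • (permB H (repPerm p)).toLinearMap)
      = (((α : ℂ) ^ ninv ((phi (σ, p) : Equiv.Perm (SIdx (m + 1)))))
          * ((q : ℂ) ^ pinv ((phi (σ, p) : Equiv.Perm (SIdx (m + 1)))))) •
          (permB H ((phi (σ, p) : Equiv.Perm (SIdx (m + 1))))).toLinearMap := by
    intro σ p
    rw [smul_mul_smul_comm, ← permB_mul]
    rw [show ((phi (σ, p) : Equiv.Perm (SIdx (m + 1))))
        = extendMid m (σ : Equiv.Perm (SIdx m)) * repPerm p from rfl]
    rw [coeff_phi α q σ p]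
  rw [Finset.sum_congr rfl fun σ _ => Finset.sum_congr rfl fun p _ => step1 σ p]
  rw [symB]
  have hsplit : (∑ x : hyperoctahedral m × SIdx (m + 1),
        (((α : ℂ) ^ ninv ((phi x : Equiv.Perm (SIdx (m + 1)))))
            * ((q : ℂ) ^ pinv ((phi x : Equiv.Perm (SIdx (m + 1)))))) •
          (permB H ((phi x : Equiv.Perm (SIdx (m + 1))))).toLinearMap)
      = ∑ σ : hyperoctahedral m, ∑ p : SIdx (m + 1),
        (((α : ℂ) ^ ninv ((phi (σ, p) : Equiv.Perm (SIdx (m + 1)))))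
            * ((q : ℂ) ^ pinv ((phi (σ, p) : Equiv.Perm (SIdx (m + 1)))))) •
          (permB H ((phi (σ, p) : Equiv.Perm (SIdx (m + 1))))).toLinearMap :=
    Fintype.sum_prod_type _
  rw [← hsplit]
  exact (Fintype.sum_bijective phi phi_bijective _ _ (fun x => rfl)).symm
/-- For every `n = m+1 ≥ 1` and `-1 ≤ α, q ≤ 1`,
`P_{α,q}^{(n)} = (I ⊗ P_{α,q}^{(n-1)} ⊗ I) ∘ R_{α,q}^{(n)}` on `K_n`. -/
theorem symB_factorization (m : ℕ) (α q : ℝ)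
    (hα : -1 ≤ α ∧ α ≤ 1) (hq : -1 ≤ q ∧ q ≤ 1) :
    symB H (m + 1) α q = midSym H m α q * Rop H m α q :=
  symB_factorization' H m α q
end
end

section
/- For every n ≥ 0, the number of non-crossing pair partitions of type B on [±2n] equals the central binomial coefficient: #NC^B_2(2n) = C(2n, n). -/
open scoped TensorProduct ComplexConjugate InnerProductSpace DirectSum
open PiTensorProduct

noncomputable section

variable (H : Type*) [NormedAddCommGroup H] [InnerProductSpace ℂ H]

/-- A real structure (conjugation) on `H`: `H` is the complexification of the
real Hilbert space `H_ℝ` of its fixed points. -/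
structure RealStructure where
  J : H →ₗ⋆[ℂ] H
  invol : ∀ v, J (J v) = v
  inner_map : ∀ u v, ⟪J u, J v⟫_ℂ = ⟪v, u⟫_ℂ

/-- The set `P^B_{1,2}(N)` of type-B set partitions of `[±N]` into singletons and pairs,
encoded as involutions `m` of `[±N]`: the 2-element orbits `{p, m p}` are the pair blocks and
the fixed points are the singletons.  The conditions say that `m` is an involution, that the
partition is invariant under reflection (`π̄ = π`), and that no pair block equals its own
reflection (`V ≠ V̄`). -/
def PB12 (N : ℕ) : Finset (SIdx N → SIdx N) :=
  Finset.univ.filter fun m =>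
    (∀ p, m (m p) = p) ∧ (∀ p, m (negIdx p) = negIdx (m p)) ∧ (∀ p, m p ≠ negIdx p)

/-- The set `P^B_2(N)` of type-B pair partitions of `[±N]` (no singleton blocks). -/
def PB2 (N : ℕ) : Finset (SIdx N → SIdx N) := (PB12 N).filter fun m => ∀ p, m p ≠ p

/-- `b` is the canonical representative of a B-pair `((-b,-a),(a,b))` of `m` (with
`-b < b`, `|a| < |b|`): `b` is the element of largest absolute value of the two blocks which
is positive, and `a = m b`. -/
def isRep {N : ℕ} (m : SIdx N → SIdx N) (b : SIdx N) : Prop :=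
  0 < sval b ∧ |sval (m b)| < sval b

instance {N : ℕ} (m : SIdx N → SIdx N) (b : SIdx N) : Decidable (isRep m b) :=
  decidable_of_iff (0 < sval b ∧ |sval (m b)| < sval b) Iff.rfl

/-- `Nb(π)`: the number of negative B-pairs `((-b,-a),(a,b))` of `π` (those with `a·b < 0`). -/
def NbB {N : ℕ} (m : SIdx N → SIdx N) : ℕ :=
  (Finset.univ.filter fun b : SIdx N => isRep m b ∧ sval (m b) < 0).card

/-- `Cr(π)`: the number of crossings of B-pairs: the number of (ordered) pairs of B-pairs
`((V̄,V),(W̄,W))` with `V` crossing `W`, plus the number of (mirror-classes of) pairs of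
B-pairs with `V̄` crossing `W` (pairs `(i,j)`, `(k,l)` cross when `i<k<j<l`). -/
def CrB {N : ℕ} (m : SIdx N → SIdx N) : ℕ :=
  (Finset.univ.filter fun bc : SIdx N × SIdx N =>
      isRep m bc.1 ∧ isRep m bc.2 ∧
      sval (m bc.1) < sval (m bc.2) ∧ sval (m bc.2) < sval bc.1 ∧ sval bc.1 < sval bc.2).card +
  (Finset.univ.filter fun bc : SIdx N × SIdx N =>
      isRep m bc.1 ∧ isRep m bc.2 ∧ sval bc.1 < sval bc.2 ∧
      -sval bc.1 < sval (m bc.2) ∧ sval (m bc.2) < -sval (m bc.1) ∧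
      -sval (m bc.1) < sval bc.2).card

/-- `Cs(π)`: the number of pairs (B-singleton `((-v),(v))`, covering B-pair `(W̄,W)`) such
that `W` covers `(v)`, plus the number of those such that `W` covers `(-v)`. -/
def CsB {N : ℕ} (m : SIdx N → SIdx N) : ℕ :=
  (Finset.univ.filter fun sc : SIdx N × SIdx N =>
      (m sc.1 = sc.1 ∧ 0 < sval sc.1) ∧ isRep m sc.2 ∧
      sval (m sc.2) < sval sc.1 ∧ sval sc.1 < sval sc.2).card +
  (Finset.univ.filter fun sc : SIdx N × SIdx N =>
      (m sc.1 = sc.1 ∧ 0 < sval sc.1) ∧ isRep m sc.2 ∧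
      sval (m sc.2) < -sval sc.1 ∧ -sval sc.1 < sval sc.2).card

/-- The set of outer B-pairs of `π` (represented by their canonical representatives):
B-pairs not covered by another B-pair. -/
def OutB {N : ℕ} (m : SIdx N → SIdx N) : Finset (SIdx N) :=
  Finset.univ.filter fun b : SIdx N => isRep m b ∧
    ∀ c : SIdx N, isRep m c → ¬(sval (m c) < sval (m b) ∧ sval b < sval c)

/-- `NC^B_2(N)`: non-crossing type-B pair partitions of `[±N]` (`Cr(π) = 0`). -/
def NCB (N : ℕ) : Finset (SIdx N → SIdx N) := (PB2 N).filter fun m => CrB m = 0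


open Classical
namespace NCBP

def IsP (flag : Bool) (N : ℕ) (f : ℕ → ℕ) (e : ℕ → Bool) : Prop :=
  (∀ i, f (f i) = i) ∧
  (∀ i, i < N → f i ≠ i) ∧
  (∀ i, N ≤ i → f i = i) ∧
  (∀ i, e (f i) = e i) ∧
  (∀ i, N ≤ i → e i = false) ∧
  (flag = false → ∀ i, e i = false) ∧
  (∀ j l, ¬(f j < j ∧ f l < l ∧ f j < f l ∧ f l < j ∧ j < l)) ∧
  (∀ j l, ¬(f j < j ∧ e j = true ∧ f l < l ∧ f l < f j ∧ j < l))

namespace IsP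
variable {flag : Bool} {N : ℕ} {f : ℕ → ℕ} {e : ℕ → Bool}
theorem invol (h : IsP flag N f e) : ∀ i, f (f i) = i := h.1
theorem ne (h : IsP flag N f e) : ∀ i, i < N → f i ≠ i := h.2.1
theorem idOut (h : IsP flag N f e) : ∀ i, N ≤ i → f i = i := h.2.2.1
theorem eMap (h : IsP flag N f e) : ∀ i, e (f i) = e i := h.2.2.2.1
theorem eOut (h : IsP flag N f e) : ∀ i, N ≤ i → e i = false := h.2.2.2.2.1
theorem eFlag (h : IsP flag N f e) : flag = false → ∀ i, e i = false := h.2.2.2.2.2.1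
theorem nc (h : IsP flag N f e) :
    ∀ j l, ¬(f j < j ∧ f l < l ∧ f j < f l ∧ f l < j ∧ j < l) := h.2.2.2.2.2.2.1
theorem nout (h : IsP flag N f e) :
    ∀ j l, ¬(f j < j ∧ e j = true ∧ f l < l ∧ f l < f j ∧ j < l) := h.2.2.2.2.2.2.2
theorem lt (h : IsP flag N f e) {i : ℕ} (hi : i < N) : f i < N := by
  by_contra hge
  have h1 := h.idOut (f i) (by omega)
  have h2 := h.invol i
  have := h.ne i hi
  omega
theorem inj (h : IsP flag N f e) {i j : ℕ} (hij : f i = f j) : i = j := by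
  have h1 := h.invol i; have h2 := h.invol j; rw [hij] at h1; omega
end IsP

/-! ### Append and wrap constructions -/

def appF (A : ℕ) (f1 f2 : ℕ → ℕ) (x : ℕ) : ℕ := if x < A then f1 x else f2 (x - A) + A
def appE (A : ℕ) (e1 e2 : ℕ → Bool) (x : ℕ) : Bool := if x < A then e1 x else e2 (x - A)
def wrF (A : ℕ) (g : ℕ → ℕ) (x : ℕ) : ℕ :=
  if x = 0 then A + 1 else if x = A + 1 then 0 else if x ≤ A then g (x - 1) + 1 else x
def wrE (A : ℕ) (b : Bool) (x : ℕ) : Bool := if x = 0 ∨ x = A + 1 then b else false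

theorem app_mem {flag : Bool} {A B : ℕ} {f1 f2 : ℕ → ℕ} {e1 e2 : ℕ → Bool}
    (h1 : IsP flag A f1 e1) (h2 : IsP flag B f2 e2) :
    IsP flag (A + B) (appF A f1 f2) (appE A e1 e2) := by
  have key : ∀ x, (x < A ∧ appF A f1 f2 x = f1 x ∧ f1 x < A ∧ appE A e1 e2 x = e1 x) ∨
      (A ≤ x ∧ appF A f1 f2 x = f2 (x - A) + A ∧ appE A e1 e2 x = e2 (x - A)) := by
    intro x
    by_cases hx : x < A
    · exact Or.inl ⟨hx, if_pos hx, h1.lt hx, if_pos hx⟩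
    · exact Or.inr ⟨by omega, if_neg hx, if_neg hx⟩
  refine ⟨?_, ?_, ?_, ?_, ?_, ?_, ?_, ?_⟩
  · intro x
    rcases key x with ⟨hx, hf, hlt, _⟩ | ⟨hx, hf, _⟩
    · rw [hf]
      rcases key (f1 x) with ⟨_, hf2, _, _⟩ | ⟨h', _, _⟩
      · rw [hf2, h1.invol]
      · omega
    · rw [hf]
      rcases key (f2 (x - A) + A) with ⟨h', _, _, _⟩ | ⟨_, hf2, _⟩
      · omega
      · rw [hf2]
        have : f2 (x - A) + A - A = f2 (x - A) := by omega
        rw [this, h2.invol]; omega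
  · intro x hx
    rcases key x with ⟨hxA, hf, _, _⟩ | ⟨hxA, hf, _⟩
    · rw [hf]; exact h1.ne x hxA
    · rw [hf]; have := h2.ne (x - A) (by omega); omega
  · intro x hx
    rcases key x with ⟨hxA, _, _, _⟩ | ⟨hxA, hf, _⟩
    · omega
    · rw [hf, h2.idOut (x - A) (by omega)]; omega
  · intro x
    rcases key x with ⟨hx, hf, hlt, he⟩ | ⟨hx, hf, he⟩
    · rw [hf, he]
      rcases key (f1 x) with ⟨_, _, _, he2⟩ | ⟨h', _, _⟩
      · rw [he2, h1.eMap]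
      · omega
    · rw [hf, he]
      rcases key (f2 (x - A) + A) with ⟨h', _, _, _⟩ | ⟨_, _, he2⟩
      · omega
      · rw [he2]
        have : f2 (x - A) + A - A = f2 (x - A) := by omega
        rw [this, h2.eMap]
  · intro x hx
    rcases key x with ⟨hxA, _, _, _⟩ | ⟨hxA, _, he⟩
    · omega
    · rw [he]; exact h2.eOut (x - A) (by omega)
  · intro hfl x
    rcases key x with ⟨_, _, _, he⟩ | ⟨_, _, he⟩
    · rw [he]; exact h1.eFlag hfl x
    · rw [he]; exact h2.eFlag hfl (x - A)
  · rintro j l ⟨c1, c2, c3, c4, c5⟩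
    rcases key j with ⟨hj, hfj, hltj, _⟩ | ⟨hj, hfj, _⟩ <;>
      rcases key l with ⟨hl, hfl, hltl, _⟩ | ⟨hl, hfl, _⟩
    · exact h1.nc j l ⟨by omega, by omega, by omega, by omega, by omega⟩
    · omega
    · omega
    · rw [hfj] at c1 c3; rw [hfl] at c2 c3 c4
      exact h2.nc (j - A) (l - A) ⟨by omega, by omega, by omega, by omega, by omega⟩
  · rintro j l ⟨c1, c2, c3, c4, c5⟩
    rcases key j with ⟨hj, hfj, hltj, hej⟩ | ⟨hj, hfj, hej⟩ <;>
      rcases key l with ⟨hl, hfl, hltl, _⟩ | ⟨hl, hfl, _⟩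
    · exact h1.nout j l ⟨by omega, by rw [← hej, c2], by omega, by omega, by omega⟩
    · omega
    · omega
    · rw [hfj] at c1 c4; rw [hfl] at c3 c4
      exact h2.nout (j - A) (l - A)
        ⟨by omega, by rw [← hej, c2], by omega, by omega, by omega⟩

theorem wrap_mem {flag : Bool} {A : ℕ} {g : ℕ → ℕ} {eg : ℕ → Bool} {b : Bool}
    (hg : IsP false A g eg) (hb : flag = false → b = false) :
    IsP flag (A + 2) (wrF A g) (wrE A b) := by
  have key : ∀ x, (x = 0 ∧ wrF A g x = A + 1) ∨ (x = A + 1 ∧ wrF A g x = 0) ∨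
      (1 ≤ x ∧ x ≤ A ∧ wrF A g x = g (x - 1) + 1 ∧ g (x - 1) < A ∧ g (x - 1) ≠ x - 1) ∨
      (A + 2 ≤ x ∧ wrF A g x = x) := by
    intro x
    rcases Nat.eq_zero_or_pos x with h0 | h0
    · exact Or.inl ⟨h0, by simp [wrF, h0]⟩
    by_cases hA1 : x = A + 1
    · exact Or.inr (Or.inl ⟨hA1, by simp [wrF, hA1]⟩)
    by_cases hle : x ≤ A
    · refine Or.inr (Or.inr (Or.inl ⟨h0, hle, ?_, hg.lt (by omega), hg.ne _ (by omega)⟩))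
      simp only [wrF, if_neg (by omega : ¬ x = 0), if_neg hA1, if_pos hle]
    · exact Or.inr (Or.inr (Or.inr ⟨by omega, by
        simp only [wrF, if_neg (by omega : ¬ x = 0), if_neg hA1, if_neg hle]⟩))
  have keyE : ∀ x, wrE A b x = if x = 0 ∨ x = A + 1 then b else false := fun _ => rfl
  refine ⟨?_, ?_, ?_, ?_, ?_, ?_, ?_, ?_⟩
  · intro x
    rcases key x with ⟨h0, hf⟩ | ⟨h0, hf⟩ | ⟨h1, h2, hf, hlt, hne⟩ | ⟨h1, hf⟩
    · rw [hf]; rcases key (A + 1) with ⟨h, _⟩ | ⟨_, hf2⟩ | ⟨_, h, _, _, _⟩ | ⟨h, _⟩ <;> omega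
    · rw [hf]; rcases key 0 with ⟨_, hf2⟩ | ⟨h, _⟩ | ⟨h, _, _, _, _⟩ | ⟨h, _⟩ <;> omega
    · rw [hf]
      rcases key (g (x - 1) + 1) with ⟨h, _⟩ | ⟨h, _⟩ | ⟨_, _, hf2, _, _⟩ | ⟨h, _⟩
      · omega
      · omega
      · rw [hf2]
        have : g (x - 1) + 1 - 1 = g (x - 1) := by omega
        rw [this, hg.invol]; omega
      · omega
    · rw [hf]; rcases key x with ⟨h, _⟩ | ⟨h, _⟩ | ⟨_, h, _, _, _⟩ | ⟨_, hf2⟩ <;> omega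
  · intro x hx
    rcases key x with ⟨h0, hf⟩ | ⟨h0, hf⟩ | ⟨h1, h2, hf, hlt, hne⟩ | ⟨h1, hf⟩ <;> omega
  · intro x hx
    rcases key x with ⟨h0, hf⟩ | ⟨h0, hf⟩ | ⟨h1, h2, hf, hlt, hne⟩ | ⟨h1, hf⟩ <;> omega
  · intro x
    have e0 : wrE A b 0 = b := by simp [wrE]
    have eA : wrE A b (A + 1) = b := by simp [wrE]
    have eo : ∀ y, y ≠ 0 → y ≠ A + 1 → wrE A b y = false := by
      intro y hy1 hy2; simp [wrE, hy1, hy2]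
    rcases key x with ⟨h0, hf⟩ | ⟨h0, hf⟩ | ⟨h1, h2, hf, hlt, hne⟩ | ⟨h1, hf⟩
    · subst h0; rw [hf, eA, e0]
    · subst h0; rw [hf, eA, e0]
    · rw [hf, eo _ (by omega) (by omega), eo _ (by omega) (by omega)]
    · rw [hf]
  · intro x hx
    have eo : ∀ y, y ≠ 0 → y ≠ A + 1 → wrE A b y = false := by
      intro y hy1 hy2; simp [wrE, hy1, hy2]
    exact eo x (by omega) (by omega)
  · intro hfl x; rw [keyE]; split_ifs with h
    · exact hb hfl
    · rfl
  · rintro j l ⟨c1, c2, c3, c4, c5⟩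
    rcases key j with ⟨h0, hfj⟩ | ⟨h0, hfj⟩ | ⟨ha, hb', hfj, hltj, hnej⟩ | ⟨ha, hfj⟩ <;>
      rcases key l with ⟨g0, hfl⟩ | ⟨g0, hfl⟩ | ⟨ga, gb, hfl, hltl, hnel⟩ | ⟨ga, hfl⟩
    all_goals try omega
    · rw [hfj] at c1 c3; rw [hfl] at c2 c3 c4
      exact hg.nc (j - 1) (l - 1) ⟨by omega, by omega, by omega, by omega, by omega⟩
  · rintro j l ⟨c1, c2, c3, c4, c5⟩
    -- the only index with `e = true` possible is `0` or `A+1`; reps with `e true` must be `A+1`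
    rw [keyE] at c2
    split_ifs at c2 with hj
    rcases hj with hj | hj <;>
      rcases key l with ⟨g0, hfl⟩ | ⟨g0, hfl⟩ | ⟨ga, gb, hfl, hltl, hnel⟩ | ⟨ga, hfl⟩ <;>
      rcases key j with ⟨h0, hfj⟩ | ⟨h0, hfj⟩ | ⟨ha, hb', hfj, hltj, hnej⟩ | ⟨ha, hfj⟩ <;>
      omega

/-! ### Splitting lemmas -/

def cutRF (A : ℕ) (F : ℕ → ℕ) (x : ℕ) : ℕ := F (x + A) - A
def cutRE (A : ℕ) (E : ℕ → Bool) (x : ℕ) : Bool := E (x + A)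
def unF (A : ℕ) (F : ℕ → ℕ) (x : ℕ) : ℕ := if x < A then F (x + 1) - 1 else x

section Split
variable {flag : Bool} {N A : ℕ} {F : ℕ → ℕ} {E : ℕ → Bool}

theorem inner_closed (h : IsP flag N F E) (hN : 0 < N) :
    ∀ x, x ≤ F 0 → F x ≤ F 0 := by
  have hj : F 0 < N := h.lt hN
  have hj0 : F 0 ≠ 0 := h.ne 0 hN
  have hFj : F (F 0) = 0 := h.invol 0
  intro x hx
  rcases Nat.eq_zero_or_pos x with h0 | h0
  · subst h0; rfl
  by_cases hxj : x = F 0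
  · subst hxj; omega
  by_contra hgt
  have hrep : F (F x) = x := h.invol x
  exact h.nc (F 0) (F x) ⟨by omega, by omega, by omega, by omega, by omega⟩

theorem outer_closed (h : IsP flag N F E) (hN : 0 < N) :
    ∀ x, F 0 < x → F 0 < F x := by
  intro x hx
  by_cases hxN : x < N
  · by_contra hle
    have := inner_closed h hN (F x) (by omega)
    rw [h.invol x] at this
    omega
  · rw [h.idOut x (by omega)]; exact lt_of_lt_of_le (h.lt hN) (by omega)

/-- Every point strictly inside the block of `0` carries sign `false`. -/
theorem interior_e_false (h : IsP flag N F E) (hN : 0 < N)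
    {x : ℕ} (hx : 0 < x) (hxj : x < F 0) : E x = false := by
  have hj0 : (0:ℕ) < F 0 := by omega
  have hFj : F (F 0) = 0 := h.invol 0
  have hxin : F x ≤ F 0 := inner_closed h hN x (by omega)
  have hxj' : F x ≠ F 0 := fun hc => by have := h.inj hc; omega
  have hx0 : F x ≠ 0 := fun hc => by
    have : F (F x) = F 0 := by rw [hc]
    rw [h.invol x] at this; omega
  have hxx : F x ≠ x := h.ne x (by have := h.lt hN; omega)
  rcases lt_or_gt_of_ne hxx with hlt | hgt
  · by_contra hc
    have hE : E x = true := by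
      cases hEx : E x
      · exact absurd hEx hc
      · rfl
    exact h.nout x (F 0) ⟨hlt, hE, by omega, by omega, by omega⟩
  · by_contra hc
    have hmap := h.eMap x
    have hE : E (F x) = true := by
      cases hEx : E x
      · exact absurd hEx hc
      · rw [hmap, hEx]
    have hrep : F (F x) = x := h.invol x
    exact h.nout (F x) (F 0) ⟨by omega, hE, by omega, by omega, by omega⟩

/-- Cutting off the first `A` points (assuming `[0,A)` is `F`-closed). -/
theorem cutR_mem (h : IsP flag N F E) (hA : ∀ x, A ≤ x → x < N → A ≤ F x) (hAN : A ≤ N) :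
    IsP flag (N - A) (cutRF A F) (cutRE A E) := by
  have key : ∀ x, x < N - A → (A ≤ F (x + A) ∧ F (x + A) < N ∧ F (x + A) ≠ x + A) := by
    intro x hx
    exact ⟨hA (x + A) (by omega) (by omega), h.lt (by omega), h.ne (x + A) (by omega)⟩
  have keyId : ∀ x, N - A ≤ x → F (x + A) = x + A := fun x hx => h.idOut (x + A) (by omega)
  refine ⟨?_, ?_, ?_, ?_, ?_, ?_, ?_, ?_⟩
  · intro x
    simp only [cutRF]
    by_cases hx : x < N - A
    · obtain ⟨k1, k2, k3⟩ := key x hx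
      have e1 : F (x + A) - A + A = F (x + A) := by omega
      rw [e1, h.invol]; omega
    · rw [keyId x (by omega), keyId _ (by omega)] <;> omega
  · intro x hx
    simp only [cutRF]
    obtain ⟨k1, k2, k3⟩ := key x hx; omega
  · intro x hx; simp only [cutRF]; rw [keyId x (by omega)]; omega
  · intro x
    simp only [cutRF, cutRE]
    by_cases hx : x < N - A
    · obtain ⟨k1, k2, k3⟩ := key x hx
      have e1 : F (x + A) - A + A = F (x + A) := by omega
      rw [e1, h.eMap]
    · rw [keyId x (by omega)]; congr 1; omega
  · intro x hx; exact h.eOut (x + A) (by omega)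
  · intro hfl x; exact h.eFlag hfl (x + A)
  · rintro j l ⟨c1, c2, c3, c4, c5⟩
    simp only [cutRF] at c1 c2 c3 c4
    have hj : j < N - A := by by_contra hc; rw [keyId j (by omega)] at c1; omega
    have hl : l < N - A := by by_contra hc; rw [keyId l (by omega)] at c2; omega
    obtain ⟨k1, _, _⟩ := key j hj
    obtain ⟨k1', _, _⟩ := key l hl
    exact h.nc (j + A) (l + A) ⟨by omega, by omega, by omega, by omega, by omega⟩
  · rintro j l ⟨c1, c2, c3, c4, c5⟩
    simp only [cutRF] at c1 c3 c4
    simp only [cutRE] at c2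
    have hj : j < N - A := by by_contra hc; rw [keyId j (by omega)] at c1; omega
    have hl : l < N - A := by by_contra hc; rw [keyId l (by omega)] at c3; omega
    obtain ⟨k1, _, _⟩ := key j hj
    obtain ⟨k1', _, _⟩ := key l hl
    exact h.nout (j + A) (l + A) ⟨by omega, c2, by omega, by omega, by omega⟩

/-- Unwrapping the block of `0`: the interior of the block of `0` is an `IsP false` structure. -/
theorem unwrap_mem (h : IsP flag N F E) (hN : 0 < N) :
    IsP false (F 0 - 1) (unF (F 0 - 1) F) (fun _ => false) := by
  have hjN : F 0 < N := h.lt hN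
  have hj0 : F 0 ≠ 0 := h.ne 0 hN
  have hFj : F (F 0) = 0 := h.invol 0
  have key : ∀ x, x < F 0 - 1 → (1 ≤ F (x + 1) ∧ F (x + 1) ≤ F 0 - 1 ∧ F (x + 1) ≠ x + 1) := by
    intro x hx
    have h1 : F (x + 1) ≤ F 0 := inner_closed h hN (x + 1) (by omega)
    have h2 : F (x + 1) ≠ F 0 := fun hc => by have := h.inj hc; omega
    have h3 : F (x + 1) ≠ 0 := fun hc => by
      have : F (F (x + 1)) = F 0 := by rw [hc]
      rw [h.invol] at this; omega
    exact ⟨by omega, by omega, h.ne (x + 1) (by omega)⟩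
  refine ⟨?_, ?_, ?_, ?_, ?_, ?_, ?_, ?_⟩
  · intro x
    simp only [unF]
    by_cases hx : x < F 0 - 1
    · obtain ⟨k1, k2, k3⟩ := key x hx
      simp only [if_pos hx]
      simp only [if_pos (show F (x + 1) - 1 < F 0 - 1 by omega)]
      have e1 : F (x + 1) - 1 + 1 = F (x + 1) := by omega
      rw [e1, h.invol]; omega
    · simp only [if_neg hx]
  · intro x hx
    simp only [unF]
    obtain ⟨k1, k2, k3⟩ := key x hx
    rw [if_pos hx]; omega
  · intro x hx; simp only [unF]; rw [if_neg (by omega)]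
  · intro x; rfl
  · intro x _; rfl
  · intro _ x; rfl
  · rintro j' l ⟨c1, c2, c3, c4, c5⟩
    simp only [unF] at c1 c2 c3 c4
    have hj' : j' < F 0 - 1 := by by_contra hc; rw [if_neg hc] at c1; omega
    have hl : l < F 0 - 1 := by by_contra hc; rw [if_neg hc] at c2; omega
    rw [if_pos hj'] at c1 c3
    rw [if_pos hl] at c2 c3 c4
    obtain ⟨k1, _, _⟩ := key j' hj'
    obtain ⟨k1', _, _⟩ := key l hl
    exact h.nc (j' + 1) (l + 1) ⟨by omega, by omega, by omega, by omega, by omega⟩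
  · rintro j' l ⟨c1, c2, c3, c4, c5⟩
    exact Bool.false_ne_true c2

end Split

/-! ### The sets and their cardinalities -/

def PSet (flag : Bool) (N : ℕ) : Set ((ℕ → ℕ) × (ℕ → Bool)) := {p | IsP flag N p.1 p.2}

theorem mem_PSet {flag : Bool} {N : ℕ} {p : (ℕ → ℕ) × (ℕ → Bool)} :
    p ∈ PSet flag N ↔ IsP flag N p.1 p.2 := Iff.rfl

instance instFinitePSet (flag : Bool) (N : ℕ) : Finite ↥(PSet flag N) := by
  let Φ : ↥(PSet flag N) → ((Fin N → Fin N) × (Fin N → Bool)) := fun x =>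
    (fun i => ⟨x.1.1 i, x.2.lt i.2⟩, fun i => x.1.2 i)
  apply Finite.of_injective Φ
  rintro ⟨⟨f1, e1⟩, h1⟩ ⟨⟨f2, e2⟩, h2⟩ heq
  have h1' : IsP flag N f1 e1 := h1
  have h2' : IsP flag N f2 e2 := h2
  obtain ⟨heqF, heqE⟩ := Prod.mk.injEq .. ▸ heq
  apply Subtype.ext
  simp only [Prod.mk.injEq]
  constructor
  · funext x
    by_cases hx : x < N
    · have := congrFun heqF ⟨x, hx⟩
      simpa [Fin.ext_iff] using this
    · rw [h1'.idOut x (by omega), h2'.idOut x (by omega)]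
  · funext x
    by_cases hx : x < N
    · exact congrFun heqE ⟨x, hx⟩
    · rw [h1'.eOut x (by omega), h2'.eOut x (by omega)]

theorem pset_zero (flag : Bool) : Nat.card ↥(PSet flag 0) = 1 := by
  have : PSet flag 0 = {(id, fun _ => false)} := by
    ext ⟨f, e⟩
    constructor
    · intro h
      have h' : IsP flag 0 f e := h
      simp only [Set.mem_singleton_iff, Prod.mk.injEq]
      exact ⟨funext fun x => h'.idOut x (by omega), funext fun x => h'.eOut x (by omega)⟩
    · intro h
      simp only [Set.mem_singleton_iff, Prod.mk.injEq] at h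
      obtain ⟨hf, he⟩ := h
      subst hf; subst he
      exact ⟨fun i => rfl, fun i hi => absurd hi (by omega), fun i _ => rfl, fun i => rfl,
        fun i _ => rfl, fun _ i => rfl,
        fun j l h => by simp only [id] at h; omega,
        fun j l h => by simp only [id] at h; omega⟩
  rw [this]
  simp

theorem pset_one (flag : Bool) : Nat.card ↥(PSet flag 1) = 0 := by
  have : PSet flag 1 = ∅ := by
    ext ⟨f, e⟩
    simp only [Set.mem_empty_iff_false, iff_false]
    intro h
    have h' : IsP flag 1 f e := h
    have := h'.lt (show 0 < 1 by omega)
    have := h'.ne 0 (by omega)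
    omega
  rw [this]
  simp

/-! ### The gluing bijection -/

def glueF (i : ℕ) (g h : ℕ → ℕ) : ℕ → ℕ := appF (i + 2) (wrF i g) h
def glueE (i : ℕ) (b : Bool) (eh : ℕ → Bool) : ℕ → Bool := appE (i + 2) (wrE i b) eh

theorem glueF_zero (i : ℕ) (g h : ℕ → ℕ) : glueF i g h 0 = i + 1 := by
  simp [glueF, appF, wrF]

theorem glueF_top (i : ℕ) (g h : ℕ → ℕ) : glueF i g h (i + 1) = 0 := by
  simp only [glueF, appF, if_pos (by omega : i + 1 < i + 2), wrF,
    if_neg (by omega : ¬ i + 1 = 0)]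
  simp

theorem glueF_inner (i : ℕ) (g h : ℕ → ℕ) {x : ℕ} (h1 : 1 ≤ x) (h2 : x ≤ i) :
    glueF i g h x = g (x - 1) + 1 := by
  simp only [glueF, appF, if_pos (by omega : x < i + 2), wrF,
    if_neg (by omega : ¬ x = 0), if_neg (by omega : ¬ x = i + 1), if_pos h2]

theorem glueF_outer (i : ℕ) (g h : ℕ → ℕ) {x : ℕ} (h1 : i + 2 ≤ x) :
    glueF i g h x = h (x - (i + 2)) + (i + 2) := by
  simp only [glueF, appF, if_neg (by omega : ¬ x < i + 2)]

theorem glueE_zero (i : ℕ) (b : Bool) (eh : ℕ → Bool) : glueE i b eh 0 = b := by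
  simp [glueE, appE, wrE]

theorem glueE_top (i : ℕ) (b : Bool) (eh : ℕ → Bool) : glueE i b eh (i + 1) = b := by
  simp only [glueE, appE, if_pos (by omega : i + 1 < i + 2), wrE]
  simp

theorem glueE_inner (i : ℕ) (b : Bool) (eh : ℕ → Bool) {x : ℕ} (h1 : 1 ≤ x) (h2 : x ≤ i) :
    glueE i b eh x = false := by
  simp only [glueE, appE, if_pos (by omega : x < i + 2), wrE,
    if_neg (by omega : ¬ (x = 0 ∨ x = i + 1))]

theorem glueE_outer (i : ℕ) (b : Bool) (eh : ℕ → Bool) {x : ℕ} (h1 : i + 2 ≤ x) :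
    glueE i b eh x = eh (x - (i + 2)) := by
  simp only [glueE, appE, if_neg (by omega : ¬ x < i + 2)]

theorem glue_mem {flag : Bool} {m i : ℕ} (him : i ≤ m) {g h : ℕ → ℕ} {eg eh : ℕ → Bool}
    {b : Bool} (hb : flag = false → b = false)
    (hg : IsP false i g eg) (hh : IsP flag (m - i) h eh) :
    IsP flag (m + 2) (glueF i g h) (glueE i b eh) := by
  have := app_mem (wrap_mem hg hb) hh
  have e : i + 2 + (m - i) = m + 2 := by omega
  rwa [e] at this

/-- The fiber of `PSet flag (m+2)` over `f 0 = i + 1`. -/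
def fiberEquiv (flag : Bool) (m : ℕ) (i : ℕ) (him : i ≤ m) :
    {x : ↥(PSet flag (m + 2)) // x.1.1 0 = i + 1} ≃
      ({b : Bool // flag = false → b = false} × (↥(PSet false i) × ↥(PSet flag (m - i)))) where
  toFun x := by
    have hmem : IsP flag (m + 2) x.1.1.1 x.1.1.2 := x.1.2
    have h0 : x.1.1.1 0 = i + 1 := x.2
    refine ⟨⟨x.1.1.2 0, fun hfl => hmem.eFlag hfl 0⟩,
      ⟨(unF i x.1.1.1, fun _ => false), ?_⟩,
      ⟨(cutRF (i + 2) x.1.1.1, cutRE (i + 2) x.1.1.2), ?_⟩⟩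
    · have := unwrap_mem hmem (by omega)
      rw [h0] at this
      simpa [mem_PSet] using this
    · have hcl : ∀ y, i + 2 ≤ y → y < m + 2 → i + 2 ≤ x.1.1.1 y := by
        intro y hy1 hy2
        have := outer_closed hmem (by omega) y (by omega)
        omega
      have := cutR_mem hmem hcl (by omega)
      have e : m + 2 - (i + 2) = m - i := by omega
      rwa [e] at this
  invFun y := by
    refine ⟨⟨(glueF i y.2.1.1.1 y.2.2.1.1, glueE i y.1.1 y.2.2.1.2), ?_⟩, ?_⟩
    · exact glue_mem him y.1.2 y.2.1.2 y.2.2.2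
    · exact glueF_zero i y.2.1.1.1 y.2.2.1.1
  left_inv := by
    rintro ⟨⟨⟨F, E⟩, hmem'⟩, h0'⟩
    have hmem : IsP flag (m + 2) F E := hmem'
    have h0 : F 0 = i + 1 := h0'
    apply Subtype.ext
    apply Subtype.ext
    simp only [Prod.mk.injEq]
    have hFi1 : F (i + 1) = 0 := by rw [← h0, hmem.invol]
    constructor
    · funext x
      rcases Nat.eq_zero_or_pos x with h | h
      · subst h; rw [glueF_zero, h0]
      by_cases hx1 : x = i + 1
      · subst hx1; rw [glueF_top, hFi1]
      by_cases hx2 : x ≤ i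
      · rw [glueF_inner i _ _ h hx2]
        simp only [unF, if_pos (by omega : x - 1 < i)]
        have e1 : x - 1 + 1 = x := by omega
        rw [e1]
        have hne0 : F x ≠ 0 := fun hc => by
          have : F (F x) = F 0 := by rw [hc]
          rw [hmem.invol] at this; omega
        omega
      · rw [glueF_outer i _ _ (by omega)]
        simp only [cutRF]
        have e1 : x - (i + 2) + (i + 2) = x := by omega
        rw [e1]
        by_cases hxm : x < m + 2
        · have := outer_closed hmem (by omega) x (by omega)
          omega
        · rw [hmem.idOut x (by omega)]; omega
    · funext x
      rcases Nat.eq_zero_or_pos x with h | h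
      · subst h; rw [glueE_zero]
      by_cases hx1 : x = i + 1
      · subst hx1
        rw [glueE_top, ← h0, hmem.eMap]
      by_cases hx2 : x ≤ i
      · rw [glueE_inner i _ _ h hx2]
        exact (interior_e_false hmem (by omega) h (by omega)).symm
      · rw [glueE_outer i _ _ (by omega)]
        simp only [cutRE]
        congr 1
        omega
  right_inv := by
    rintro ⟨⟨b, hb⟩, ⟨⟨g, eg⟩, hg'⟩, ⟨⟨h, eh⟩, hh'⟩⟩
    have hg : IsP false i g eg := hg'
    have hh : IsP flag (m - i) h eh := hh'
    simp only [Prod.mk.injEq]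
    refine ⟨Subtype.ext ?_, Subtype.ext ?_, Subtype.ext ?_⟩
    · simp only
      rw [glueE_zero]
    · simp only [Prod.mk.injEq]
      constructor
      · funext x
        simp only [unF]
        by_cases hx : x < i
        · rw [if_pos hx, glueF_inner i _ _ (by omega) (by omega)]
          have e1 : x + 1 - 1 = x := by omega
          rw [e1]; omega
        · rw [if_neg hx, hg.idOut x (by omega)]
      · funext x
        exact (hg.eFlag rfl x).symm
    · simp only [Prod.mk.injEq]
      constructor
      · funext x
        simp only [cutRF]
        rw [glueF_outer i _ _ (by omega)]
        have e1 : x + (i + 2) - (i + 2) = x := by omega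
        rw [e1]; omega
      · funext x
        simp only [cutRE]
        rw [glueE_outer i _ _ (by omega)]
        congr 1
        omega

/-! ### The cardinality recursion -/

theorem sgn_card (flag : Bool) :
    Nat.card {b : Bool // flag = false → b = false} = if flag then 2 else 1 := by
  cases flag <;> rw [Nat.card_eq_fintype_card] <;> decide

theorem card_rec (flag : Bool) (m : ℕ) :
    Nat.card ↥(PSet flag (m + 2)) =
      ∑ i ∈ Finset.range (m + 1),
        (if flag then 2 else 1) * Nat.card ↥(PSet false i) * Nat.card ↥(PSet flag (m - i)) := by
  classical
  have hfib : ∀ x : ↥(PSet flag (m + 2)), x.1.1 0 - 1 < m + 1 := by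
    intro x
    have h := x.2
    have h1 : x.1.1 0 < m + 2 := h.lt (by omega)
    omega
  let fib : ↥(PSet flag (m + 2)) → Fin (m + 1) := fun x => ⟨x.1.1 0 - 1, hfib x⟩
  have e1 : Nat.card ↥(PSet flag (m + 2)) =
      Nat.card (Σ i : Fin (m + 1), {x : ↥(PSet flag (m + 2)) // fib x = i}) :=
    (Nat.card_congr (Equiv.sigmaFiberEquiv fib)).symm
  rw [e1]
  letI : ∀ i : Fin (m + 1), Fintype {x : ↥(PSet flag (m + 2)) // fib x = i} :=
    fun i => Fintype.ofFinite _
  rw [Nat.card_eq_fintype_card, Fintype.card_sigma]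
  rw [Finset.sum_range fun i =>
    (if flag then 2 else 1) * Nat.card ↥(PSet false i) * Nat.card ↥(PSet flag (m - i))]
  apply Finset.sum_congr rfl
  intro i _
  have efib : ∀ x : ↥(PSet flag (m + 2)), fib x = i ↔ x.1.1 0 = (i : ℕ) + 1 := by
    intro x
    have h := x.2
    have h0 : x.1.1 0 ≠ 0 := h.ne 0 (by omega)
    simp only [fib, Fin.ext_iff]
    omega
  have := Nat.card_congr
    ((Equiv.subtypeEquivRight efib).trans (fiberEquiv flag m i (by omega)))
  rw [Nat.card_eq_fintype_card] at this
  rw [this, Nat.card_prod, Nat.card_prod, sgn_card, mul_assoc]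

/-! ### Numeric evaluation -/

theorem pset_false_odd : ∀ m, Nat.card ↥(PSet false (2 * m + 1)) = 0 := by
  intro m
  induction m using Nat.strong_induction_on with
  | _ m ih =>
    cases m with
    | zero => exact pset_one false
    | succ k =>
      have e : 2 * (k + 1) + 1 = (2 * k + 1) + 2 := by omega
      rw [e, card_rec]
      apply Finset.sum_eq_zero
      intro i hi
      simp only [Finset.mem_range] at hi
      rcases Nat.even_or_odd i with ⟨t, ht⟩ | ⟨t, ht⟩
      · have e2 : 2 * k + 1 - i = 2 * (k - t) + 1 := by omega
        rw [e2, ih (k - t) (by omega)]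
        ring
      · have e2 : i = 2 * t + 1 := by omega
        rw [e2, ih t (by omega)]
        ring
  
theorem sum_even_terms (F : ℕ → ℕ) (hodd : ∀ t, F (2 * t + 1) = 0) :
    ∀ k, ∑ i ∈ Finset.range (2 * k + 1), F i = ∑ t ∈ Finset.range (k + 1), F (2 * t) := by
  intro k
  induction k with
  | zero => simp
  | succ n ihn =>
    have e : 2 * (n + 1) + 1 = (2 * n + 1) + 1 + 1 := by omega
    have h1 : ∑ i ∈ Finset.range ((2 * n + 1) + 1 + 1), F i
        = (∑ i ∈ Finset.range (2 * n + 1), F i) + F (2 * n + 1) + F ((2 * n + 1) + 1) := by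
      rw [Finset.sum_range_succ, Finset.sum_range_succ]
    have h2 : ∑ t ∈ Finset.range (n + 1 + 1), F (2 * t)
        = (∑ t ∈ Finset.range (n + 1), F (2 * t)) + F (2 * (n + 1)) :=
      Finset.sum_range_succ _ _
    have e3 : 2 * n + 1 + 1 = 2 * (n + 1) := by omega
    rw [e, h1, h2, ihn, hodd n, e3]
    omega

theorem pset_false_even : ∀ m, Nat.card ↥(PSet false (2 * m)) = catalan m := by
  intro m
  induction m using Nat.strong_induction_on with
  | _ m ih =>
    cases m with
    | zero => simpa using pset_zero false
    | succ k =>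
      have e : 2 * (k + 1) = 2 * k + 2 := by omega
      rw [e, card_rec, catalan_succ]
      rw [show (∑ i : Fin k.succ, catalan ↑i * catalan (k - ↑i)) =
        ∑ i ∈ Finset.range (k + 1), catalan i * catalan (k - i) from
        (Finset.sum_range fun i => catalan i * catalan (k - i)).symm]
      simp only [show (if (false : Bool) = true then (2:ℕ) else 1) = 1 from rfl, one_mul]
      rw [sum_even_terms (fun i => Nat.card ↥(PSet false i) * Nat.card ↥(PSet false (2 * k - i)))
        (fun t => by simp [pset_false_odd t]) k]
      apply Finset.sum_congr rfl
      intro t ht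
      simp only [Finset.mem_range] at ht
      have e2 : 2 * k - 2 * t = 2 * (k - t) := by omega
      rw [e2, ih t (by omega), ih (k - t) (by omega)]

theorem central_id (n : ℕ) :
    Nat.centralBinom (n + 1) =
      2 * ∑ k ∈ Finset.range (n + 1), catalan k * Nat.centralBinom (n - k) := by
  have key : ∀ k ∈ Finset.range (n + 1),
      catalan k * Nat.centralBinom (n - k) = (n - k + 1) * (catalan k * catalan (n - k)) := by
    intro k _
    rw [← succ_mul_catalan_eq_centralBinom]
    ring
  rw [Finset.sum_congr rfl key]
  have refl1 : ∑ k ∈ Finset.range (n + 1), (n - k + 1) * (catalan k * catalan (n - k)) =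
      ∑ k ∈ Finset.range (n + 1), (k + 1) * (catalan k * catalan (n - k)) := by
    rw [← Finset.sum_range_reflect (fun k => (k + 1) * (catalan k * catalan (n - k))) (n + 1)]
    apply Finset.sum_congr rfl
    intro k hk
    simp only [Finset.mem_range] at hk
    have e1 : n + 1 - 1 - k = n - k := by omega
    have e2 : n - (n - k) = k := by omega
    rw [e1, e2, mul_comm (catalan (n - k)) (catalan k)]
  have hc : catalan (n + 1) = ∑ k ∈ Finset.range (n + 1), catalan k * catalan (n - k) := by
    rw [catalan_succ]
    exact (Finset.sum_range fun i => catalan i * catalan (n - i)).symm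
  have h2 : (n + 2) * catalan (n + 1) = Nat.centralBinom (n + 1) :=
    succ_mul_catalan_eq_centralBinom (n + 1)
  calc Nat.centralBinom (n + 1) = (n + 2) * catalan (n + 1) := h2.symm
    _ = ∑ k ∈ Finset.range (n + 1), (n + 2) * (catalan k * catalan (n - k)) := by
        rw [hc, Finset.mul_sum]
    _ = ∑ k ∈ Finset.range (n + 1),
          ((n - k + 1) * (catalan k * catalan (n - k)) + (k + 1) * (catalan k * catalan (n - k))) := by
        apply Finset.sum_congr rfl
        intro k hk
        simp only [Finset.mem_range] at hk
        have : n + 2 = (n - k + 1) + (k + 1) := by omega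
        rw [this, add_mul]
    _ = (∑ k ∈ Finset.range (n + 1), (n - k + 1) * (catalan k * catalan (n - k))) +
          ∑ k ∈ Finset.range (n + 1), (k + 1) * (catalan k * catalan (n - k)) :=
        Finset.sum_add_distrib
    _ = 2 * ∑ k ∈ Finset.range (n + 1), (n - k + 1) * (catalan k * catalan (n - k)) := by
        rw [← refl1, two_mul]

theorem pset_true_even : ∀ n, Nat.card ↥(PSet true (2 * n)) = Nat.centralBinom n := by
  intro n
  induction n using Nat.strong_induction_on with
  | _ n ih =>
    cases n with
    | zero => simpa [Nat.centralBinom_zero] using pset_zero true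
    | succ k =>
      have e : 2 * (k + 1) = 2 * k + 2 := by omega
      rw [e, card_rec, central_id]
      simp only [eq_self_iff_true, if_true]
      rw [sum_even_terms
        (fun i => 2 * Nat.card ↥(PSet false i) * Nat.card ↥(PSet true (2 * k - i)))
        (fun t => by simp [pset_false_odd t]) k]
      rw [Finset.mul_sum]
      apply Finset.sum_congr rfl
      intro t ht
      simp only [Finset.mem_range] at ht
      have e2 : 2 * k - 2 * t = 2 * (k - t) := by omega
      rw [e2, pset_false_even t, ih (k - t) (by omega)]
      ring

/-! ### Translation between `NCB` and `PSet true` -/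

section Translate

variable {N : ℕ}

def toF (m : SIdx N → SIdx N) : ℕ → ℕ :=
  fun x => if h : x < N then ((m (⟨x, h⟩, true)).1 : ℕ) else x

def toE (m : SIdx N → SIdx N) : ℕ → Bool :=
  fun x => if h : x < N then !(m (⟨x, h⟩, true)).2 else false

theorem toF_eq (m : SIdx N → SIdx N) (i : Fin N) : toF m (i : ℕ) = ((m (i, true)).1 : ℕ) := by
  simp [toF]

theorem toE_eq (m : SIdx N → SIdx N) (i : Fin N) : toE m (i : ℕ) = !(m (i, true)).2 := by
  simp [toE]

theorem sval_true (i : Fin N) : sval ((i, true) : SIdx N) = (i : ℤ) + 1 := by simp [sval]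

theorem sval_false (i : Fin N) : sval ((i, false) : SIdx N) = -((i : ℤ) + 1) := by simp [sval]

theorem sval_m (m : SIdx N → SIdx N) (i : Fin N) :
    sval (m (i, true)) =
      if toE m (i : ℕ) then -((toF m (i : ℕ) : ℤ) + 1) else (toF m (i : ℕ) : ℤ) + 1 := by
  rw [toF_eq, toE_eq]
  rcases hm : m (i, true) with ⟨a, b⟩
  cases b <;> simp [sval]

theorem isRep_true_iff (m : SIdx N → SIdx N) (i : Fin N) :
    isRep m (i, true) ↔ toF m (i : ℕ) < (i : ℕ) := by
  unfold isRep
  rw [sval_true, sval_m]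
  split_ifs with h
  · have habs : |-((toF m (i:ℕ) : ℤ) + 1)| = (toF m (i:ℕ) : ℤ) + 1 := by
      rw [abs_neg]; exact abs_of_nonneg (by positivity)
    rw [habs]
    omega
  · have habs : |(toF m (i:ℕ) : ℤ) + 1| = (toF m (i:ℕ) : ℤ) + 1 := abs_of_nonneg (by positivity)
    rw [habs]
    omega

theorem not_isRep_false (m : SIdx N → SIdx N) (i : Fin N) : ¬ isRep m (i, false) := by
  unfold isRep
  rw [sval_false]
  rintro ⟨h1, -⟩
  omega

theorem crB_eq_zero_iff (m : SIdx N → SIdx N) :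
    CrB m = 0 ↔ (∀ b c : SIdx N, ¬(isRep m b ∧ isRep m c ∧
        sval (m b) < sval (m c) ∧ sval (m c) < sval b ∧ sval b < sval c)) ∧
      (∀ b c : SIdx N, ¬(isRep m b ∧ isRep m c ∧ sval b < sval c ∧
        -sval b < sval (m c) ∧ sval (m c) < -sval (m b) ∧ -sval (m b) < sval c)) := by
  unfold CrB
  rw [Nat.add_eq_zero, Finset.card_eq_zero, Finset.card_eq_zero,
    Finset.filter_eq_empty_iff, Finset.filter_eq_empty_iff]
  constructor
  · rintro ⟨h1, h2⟩
    exact ⟨fun b c hx => h1 (Finset.mem_univ (b, c)) hx,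
      fun b c hx => h2 (Finset.mem_univ (b, c)) hx⟩
  · rintro ⟨h1, h2⟩
    exact ⟨fun {bc} _ => h1 bc.1 bc.2, fun {bc} _ => h2 bc.1 bc.2⟩

theorem no_cross_of_crB (m : SIdx N → SIdx N) (hcr : CrB m = 0) (J L : Fin N) :
    ¬(toF m ↑J < ↑J ∧ toF m ↑L < ↑L ∧ toF m ↑J < toF m ↑L ∧
      toF m (↑L : ℕ) < ↑J ∧ (J : ℕ) < ↑L) := by
  rintro ⟨c1, c2, c3, c4, c5⟩
  obtain ⟨hcr1, hcr2⟩ := (crB_eq_zero_iff m).mp hcr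
  have hRJ : isRep m (J, true) := (isRep_true_iff m J).mpr c1
  have hRL : isRep m (L, true) := (isRep_true_iff m L).mpr c2
  have eJ := sval_m m J
  have eL := sval_m m L
  cases hEJ : toE m (J : ℕ) <;> cases hEL : toE m (L : ℕ) <;>
    rw [hEJ] at eJ <;> rw [hEL] at eL <;>
    simp only [if_pos rfl, if_neg Bool.false_ne_true] at eJ eL
  · exact hcr1 (J, true) (L, true)
      ⟨hRJ, hRL, by rw [eJ, eL]; push_cast; omega,
        by rw [eL, sval_true]; push_cast; omega, by rw [sval_true, sval_true]; push_cast; omega⟩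
  · exact hcr2 (J, true) (L, true)
      ⟨hRJ, hRL, by rw [sval_true, sval_true]; push_cast; omega,
        by rw [eL, sval_true]; push_cast; omega, by rw [eJ, eL]; push_cast; omega,
        by rw [eJ, sval_true]; push_cast; omega⟩
  · exact hcr1 (J, true) (L, true)
      ⟨hRJ, hRL, by rw [eJ, eL]; push_cast; omega,
        by rw [eL, sval_true]; push_cast; omega, by rw [sval_true, sval_true]; push_cast; omega⟩
  · exact hcr2 (J, true) (L, true)
      ⟨hRJ, hRL, by rw [sval_true, sval_true]; push_cast; omega,
        by rw [eL, sval_true]; push_cast; omega, by rw [eJ, eL]; push_cast; omega,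
        by rw [eJ, sval_true]; push_cast; omega⟩

theorem no_nest_of_crB (m : SIdx N → SIdx N) (hcr : CrB m = 0) (J L : Fin N) :
    ¬(toF m ↑J < ↑J ∧ toE m ↑J = true ∧ toF m ↑L < ↑L ∧
      toF m (↑L : ℕ) < toF m ↑J ∧ (J : ℕ) < ↑L) := by
  rintro ⟨c1, c2, c3, c4, c5⟩
  obtain ⟨hcr1, hcr2⟩ := (crB_eq_zero_iff m).mp hcr
  have hRJ : isRep m (J, true) := (isRep_true_iff m J).mpr c1
  have hRL : isRep m (L, true) := (isRep_true_iff m L).mpr c3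
  have eJ := sval_m m J
  have eL := sval_m m L
  rw [c2] at eJ
  simp only [if_pos rfl] at eJ
  cases hEL : toE m (L : ℕ) <;> rw [hEL] at eL <;>
    simp only [if_pos rfl, if_neg Bool.false_ne_true] at eL
  · exact hcr1 (J, true) (L, true)
      ⟨hRJ, hRL, by rw [eJ, eL]; push_cast; omega,
        by rw [eL, sval_true]; push_cast; omega, by rw [sval_true, sval_true]; push_cast; omega⟩
  · exact hcr2 (J, true) (L, true)
      ⟨hRJ, hRL, by rw [sval_true, sval_true]; push_cast; omega,
        by rw [eL, sval_true]; push_cast; omega, by rw [eJ, eL]; push_cast; omega,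
        by rw [eJ, sval_true]; push_cast; omega⟩

theorem negIdx_invol (p : SIdx N) : negIdx (negIdx p) = p := by
  simp [negIdx]

theorem toP_mem {m : SIdx N → SIdx N} (hm : m ∈ NCB N) : IsP true N (toF m) (toE m) := by
  simp only [NCB, PB2, PB12, Finset.mem_filter, Finset.mem_univ, true_and] at hm
  obtain ⟨⟨⟨hinv, hequi, hneg⟩, hfix⟩, hcr⟩ := hm
  have key : ∀ i : Fin N, m ((m (i, true)).1, true) = (i, (m (i, true)).2) := by
    intro i
    have hminv := hinv (i, true)
    rcases hq : m (i, true) with ⟨a, b⟩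
    rw [hq] at hminv
    cases b
    · have he := hequi (a, true)
      have he2 : m (a, false) = negIdx (m (a, true)) := he
      rw [hminv] at he2
      have := congrArg negIdx he2
      rw [negIdx_invol] at this
      rw [← this]
      rfl
    · exact hminv
  refine ⟨?_, ?_, ?_, ?_, ?_, ?_, ?_, ?_⟩
  · intro x
    by_cases hx : x < N
    · set i : Fin N := ⟨x, hx⟩ with hi
      have e1 : toF m x = ((m (i, true)).1 : ℕ) := by simp only [toF, dif_pos hx]; rfl
      rw [e1, toF_eq, key i]
    · simp only [toF, dif_neg hx]
  · intro x hx
    set i : Fin N := ⟨x, hx⟩ with hi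
    have e1 : toF m x = ((m (i, true)).1 : ℕ) := by simp only [toF, dif_pos hx]; rfl
    rw [e1]
    intro hFx
    have ha : (m (i, true)).1 = i := Fin.ext hFx
    rcases hq : m (i, true) with ⟨a, b⟩
    rw [hq] at ha
    cases b
    · have ha' : a = i := ha
      exact hneg (i, true) (by rw [hq, ha']; rfl)
    · have ha' : a = i := ha
      exact hfix (i, true) (by rw [hq, ha'])
  · intro x hx; simp only [toF, dif_neg (by omega : ¬ x < N)]
  · intro x
    by_cases hx : x < N
    · set i : Fin N := ⟨x, hx⟩ with hi
      have e1 : toF m x = ((m (i, true)).1 : ℕ) := by simp only [toF, dif_pos hx]; rfl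
      have e2 : toE m x = !(m (i, true)).2 := by simp only [toE, dif_pos hx]; rfl
      rw [e1, toE_eq, key i, e2]
    · have e1 : toF m x = x := by simp only [toF, dif_neg hx]
      rw [e1]
  · intro x hx; simp only [toE, dif_neg (by omega : ¬ x < N)]
  · intro h; exact absurd h (by simp)
  · rintro j l ⟨c1, c2, c3, c4, c5⟩
    have hj : j < N := by
      by_contra hc; simp only [toF, dif_neg hc] at c1; omega
    have hl : l < N := by
      by_contra hc; simp only [toF, dif_neg hc] at c2; omega
    exact no_cross_of_crB m hcr ⟨j, hj⟩ ⟨l, hl⟩ ⟨c1, c2, c3, c4, c5⟩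
  · rintro j l ⟨c1, c2, c3, c4, c5⟩
    have hj : j < N := by
      by_contra hc; simp only [toF, dif_neg hc] at c1; omega
    have hl : l < N := by
      by_contra hc; simp only [toF, dif_neg hc] at c3; omega
    exact no_nest_of_crB m hcr ⟨j, hj⟩ ⟨l, hl⟩ ⟨c1, c2, c3, c4, c5⟩

end Translate

/-! ### From `PSet` back to partitions -/

section Back

variable {N : ℕ}

def toM (f : ℕ → ℕ) (e : ℕ → Bool) : SIdx N → SIdx N :=
  fun q => (if h : f (q.1 : ℕ) < N then (⟨f (q.1 : ℕ), h⟩ : Fin N) else q.1,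
    xor q.2 (e (q.1 : ℕ)))

theorem toM_eval {f : ℕ → ℕ} {e : ℕ → Bool} (hp : IsP true N f e) (q : SIdx N) :
    toM f e q = ((⟨f (q.1 : ℕ), hp.lt q.1.isLt⟩ : Fin N), xor q.2 (e (q.1 : ℕ))) := by
  simp only [toM, dif_pos (hp.lt q.1.isLt)]

theorem toF_toM {f : ℕ → ℕ} {e : ℕ → Bool} (hp : IsP true N f e) :
    toF (toM f e : SIdx N → SIdx N) = f := by
  funext x
  by_cases hx : x < N
  · simp only [toF, dif_pos hx]
    rw [toM_eval hp]
  · simp only [toF, dif_neg hx]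
    exact (hp.idOut x (by omega)).symm

theorem toE_toM {f : ℕ → ℕ} {e : ℕ → Bool} (hp : IsP true N f e) :
    toE (toM f e : SIdx N → SIdx N) = e := by
  funext x
  by_cases hx : x < N
  · simp only [toE, dif_pos hx]
    rw [toM_eval hp]
    simp
  · simp only [toE, dif_neg hx]
    exact (hp.eOut x (by omega)).symm

theorem toM_mem {f : ℕ → ℕ} {e : ℕ → Bool} (hp : IsP true N f e) :
    (toM f e : SIdx N → SIdx N) ∈ NCB N := by
  have hFM := toF_toM hp
  have hEM := toE_toM hp
  simp only [NCB, PB2, PB12, Finset.mem_filter, Finset.mem_univ, true_and]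
  refine ⟨⟨⟨?_, ?_, ?_⟩, ?_⟩, ?_⟩
  · -- involution
    intro q
    rw [toM_eval hp, toM_eval hp]
    have hff : f (f (q.1 : ℕ)) = (q.1 : ℕ) := hp.invol _
    have hee : e (f (q.1 : ℕ)) = e (q.1 : ℕ) := hp.eMap _
    refine Prod.ext (Fin.ext ?_) ?_
    · exact hff
    · simp only [hee]
      cases q.2 <;> cases e (q.1 : ℕ) <;> rfl
  · -- equivariance
    intro q
    rw [toM_eval hp]
    have : negIdx q = (q.1, !q.2) := rfl
    rw [this, toM_eval hp]
    refine Prod.ext rfl ?_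
    simp only [negIdx]
    cases q.2 <;> cases e (q.1 : ℕ) <;> rfl
  · -- no block equal to its reflection
    intro q hq
    rw [toM_eval hp] at hq
    have h1 : f (q.1 : ℕ) = (q.1 : ℕ) := by
      have := congrArg Prod.fst hq
      simpa [negIdx] using congrArg Fin.val this
    exact hp.ne (q.1 : ℕ) q.1.isLt h1
  · -- no fixed points
    intro q hq
    rw [toM_eval hp] at hq
    have h1 : f (q.1 : ℕ) = (q.1 : ℕ) := by
      have := congrArg Prod.fst hq
      simpa using congrArg Fin.val this
    exact hp.ne (q.1 : ℕ) q.1.isLt h1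
  · -- noncrossing
    rw [crB_eq_zero_iff]
    constructor
    · rintro ⟨J, sJ⟩ ⟨L, sL⟩ ⟨hRJ, hRL, c1, c2, c3⟩
      cases sJ
      · exact not_isRep_false _ J hRJ
      cases sL
      · exact not_isRep_false _ L hRL
      rw [isRep_true_iff, hFM] at hRJ hRL
      rw [sval_m, sval_m, hFM, hEM] at c1
      rw [sval_m, hFM, hEM] at c2
      rw [sval_true] at c2
      rw [sval_true, sval_true] at c3
      have hJL : (J : ℕ) < (L : ℕ) := by omega
      cases hEJ : e (J : ℕ) <;> rw [hEJ] at c1 <;> cases hEL : e (L : ℕ) <;> rw [hEL] at c1 c2 <;>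
        simp only [eq_self_iff_true, Bool.false_eq_true, if_true, if_false] at c1 c2
      · exact hp.nc (J : ℕ) (L : ℕ) ⟨hRJ, hRL, by omega, by omega, hJL⟩
      · omega
      · rcases lt_trichotomy (f (J : ℕ)) (f (L : ℕ)) with ht | ht | ht
        · exact hp.nc (J : ℕ) (L : ℕ) ⟨hRJ, hRL, ht, by omega, hJL⟩
        · have := hp.inj ht; omega
        · exact hp.nout (J : ℕ) (L : ℕ) ⟨hRJ, hEJ, hRL, ht, hJL⟩
      · exact hp.nout (J : ℕ) (L : ℕ) ⟨hRJ, hEJ, hRL, by omega, hJL⟩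
    · rintro ⟨J, sJ⟩ ⟨L, sL⟩ ⟨hRJ, hRL, c1, c2, c3, c4⟩
      cases sJ
      · exact not_isRep_false _ J hRJ
      cases sL
      · exact not_isRep_false _ L hRL
      rw [isRep_true_iff, hFM] at hRJ hRL
      rw [sval_true, sval_true] at c1
      rw [sval_true, sval_m, hFM, hEM] at c2
      rw [sval_m, sval_m, hFM, hEM] at c3
      rw [sval_m, hFM, hEM, sval_true] at c4
      have hJL : (J : ℕ) < (L : ℕ) := by omega
      cases hEJ : e (J : ℕ) <;> rw [hEJ] at c3 c4 <;> cases hEL : e (L : ℕ) <;>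
        rw [hEL] at c2 c3 <;>
        simp only [eq_self_iff_true, Bool.false_eq_true, if_true, if_false] at c2 c3 c4
      · omega
      · exact hp.nc (J : ℕ) (L : ℕ) ⟨hRJ, hRL, by omega, by omega, hJL⟩
      · exact hp.nout (J : ℕ) (L : ℕ) ⟨hRJ, hEJ, hRL, by omega, hJL⟩
      · rcases lt_trichotomy (f (J : ℕ)) (f (L : ℕ)) with ht | ht | ht
        · exact hp.nc (J : ℕ) (L : ℕ) ⟨hRJ, hRL, ht, by omega, hJL⟩
        · have := hp.inj ht; omega
        · exact hp.nout (J : ℕ) (L : ℕ) ⟨hRJ, hEJ, hRL, ht, hJL⟩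

end Back

/-! ### The equivalence and the final count -/

def transEquiv (N : ℕ) : ↥(NCB N) ≃ ↥(PSet true N) where
  toFun x := ⟨(toF x.1, toE x.1), toP_mem x.2⟩
  invFun y := ⟨toM y.1.1 y.1.2, toM_mem y.2⟩
  left_inv := by
    rintro ⟨m, hm⟩
    apply Subtype.ext
    simp only
    have hm' := hm
    simp only [NCB, PB2, PB12, Finset.mem_filter, Finset.mem_univ, true_and] at hm'
    obtain ⟨⟨⟨hinv, hequi, hneg⟩, hfix⟩, hcr⟩ := hm'
    have hp : IsP true N (toF m) (toE m) := toP_mem hm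
    funext q
    rcases q with ⟨i, s⟩
    rw [toM_eval hp]
    have e1 : toF m (i : ℕ) = ((m (i, true)).1 : ℕ) := toF_eq m i
    have e2 : toE m (i : ℕ) = !(m (i, true)).2 := toE_eq m i
    cases s
    · -- m (i, false) = negIdx (m (i,true))
      have he : m (i, false) = negIdx (m (i, true)) := hequi (i, true)
      rw [he]
      refine Prod.ext (Fin.ext ?_) ?_
      · simpa [negIdx] using e1
      · simp only [negIdx, e2]
        cases (m (i, true)).2 <;> rfl
    · refine Prod.ext (Fin.ext ?_) ?_
      · simpa using e1
      · simp only [e2]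
        cases (m (i, true)).2 <;> rfl
  right_inv := by
    rintro ⟨⟨f, e⟩, hp'⟩
    have hp : IsP true N f e := hp'
    apply Subtype.ext
    simp only [Prod.mk.injEq]
    exact ⟨toF_toM hp, toE_toM hp⟩

theorem ncb_card (N : ℕ) : (NCB N).card = Nat.card ↥(PSet true N) := by
  classical
  rw [← Fintype.card_coe, ← Nat.card_eq_fintype_card]
  exact Nat.card_congr (transEquiv N)

end NCBP

/-- For every `n ≥ 0`, the number of non-crossing type-B pair partitions
of `[±2n]` is the central binomial coefficient: `#NC^B_2(2n) = C(2n, n)`. -/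
theorem NCB_card (n : ℕ) : (NCB (2 * n)).card = Nat.choose (2 * n) n := by
  rw [NCBP.ncb_card, NCBP.pset_true_even n, Nat.centralBinom_eq_two_mul_choose]
end
end
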